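/- arXiv:2601.06322 — 5 statements merged into one kernel-verified Lean document; each statement's English description precedes it below -/
import Mathlib

section
/- Let G be a group acting on a p-uniformly smooth Banach space E (1 < p ≤ 2) by uniformly bounded invertible linear operators, i.e. via a homomorphism π : G → GL(E) with sup_{g∈G} ‖π(g)‖_op < ∞. Then there exists a norm |||·||| on E, equivalent to the original norm, which is G-invariant (|||π(g)v||| = |||v||| for all g ∈ G and v ∈ E) and p-uniformly smooth (its modulus of uniform smoothness satisfies ρ(τ) ≤ K τ^p for some constant K and all τ > 0). -/
/-- The modulus of uniform smoothness of a norm-like function `N` on `E`: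
`ρ_N(τ) = sup {(N(u+v) + N(u-v))/2 - 1 : N u ≤ 1, N v ≤ τ}`. -/
noncomputable def modulusOfSmoothnessFor {E : Type*} [AddCommGroup E] (N : E → ℝ) (τ : ℝ) : ℝ :=
  sSup {x : ℝ | ∃ u v : E, N u ≤ 1 ∧ N v ≤ τ ∧ x = (N (u + v) + N (u - v)) / 2 - 1}

section Aux
variable {G : Type*} [Group G] {E : Type*} [NormedAddCommGroup E] [NormedSpace ℝ E]

/-- Decomposition set for the invariant norm. -/
def decompSet (π : G →* (E ≃L[ℝ] E)) (x : E) : Set ℝ :=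
  {r | ∃ l : List (G × E), x = (l.map fun q => π q.1 q.2).sum ∧ r = (l.map fun q => ‖q.2‖).sum}

noncomputable def invNorm (π : G →* (E ≃L[ℝ] E)) (x : E) : ℝ := sInf (decompSet π x)

variable (π : G →* (E ≃L[ℝ] E))

theorem norm_mem_decompSet (x : E) : ‖x‖ ∈ decompSet π x := by
  exact ⟨[(1, x)], by simp; rfl, by simp⟩

theorem decompSet_nonneg {x : E} {r : ℝ} (hr : r ∈ decompSet π x) : 0 ≤ r := by
  obtain ⟨l, -, rfl⟩ := hr
  refine List.sum_nonneg fun a ha => ?_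
  obtain ⟨q, -, rfl⟩ := List.mem_map.1 ha
  exact norm_nonneg _

theorem norm_le_of_mem {C : ℝ} (hC : ∀ g : G, ‖(π g : E →L[ℝ] E)‖ ≤ C)
    {x : E} {r : ℝ} (hr : r ∈ decompSet π x) : ‖x‖ ≤ C * r := by
  obtain ⟨l, rfl, rfl⟩ := hr
  induction l with
  | nil => simp
  | cons q l ih =>
    simp only [List.map_cons, List.sum_cons]
    calc ‖π q.1 q.2 + (l.map fun q => π q.1 q.2).sum‖
        ≤ ‖π q.1 q.2‖ + ‖(l.map fun q => π q.1 q.2).sum‖ := norm_add_le _ _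
      _ ≤ C * ‖q.2‖ + C * (l.map fun q => ‖q.2‖).sum := by
          have h1 : ‖π q.1 q.2‖ ≤ C * ‖q.2‖ := ((π q.1 : E →L[ℝ] E).le_opNorm q.2).trans
              (mul_le_mul_of_nonneg_right (hC q.1) (norm_nonneg _))
          exact add_le_add h1 ih
      _ = C * (‖q.2‖ + (l.map fun q => ‖q.2‖).sum) := by ring

theorem decompSet_nonempty (x : E) : (decompSet π x).Nonempty := ⟨‖x‖, norm_mem_decompSet π x⟩

theorem decompSet_bddBelow (x : E) : BddBelow (decompSet π x) :=
  ⟨0, fun r hr => decompSet_nonneg π hr⟩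

theorem invNorm_le {x : E} {r : ℝ} (hr : r ∈ decompSet π x) : invNorm π x ≤ r :=
  csInf_le (decompSet_bddBelow π x) hr

theorem invNorm_le_norm (x : E) : invNorm π x ≤ ‖x‖ := invNorm_le π (norm_mem_decompSet π x)

theorem invNorm_nonneg (x : E) : 0 ≤ invNorm π x :=
  le_csInf (decompSet_nonempty π x) fun r hr => decompSet_nonneg π hr

theorem invNorm_zero : invNorm π (0 : E) = 0 :=
  le_antisymm (invNorm_le π ⟨[], by simp, by simp⟩) (invNorm_nonneg π 0)

theorem norm_le_mul_invNorm {C : ℝ} (hC : ∀ g : G, ‖(π g : E →L[ℝ] E)‖ ≤ C) (x : E) :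
    ‖x‖ ≤ C * invNorm π x := by
  rcases le_or_gt C 0 with h | h
  · have := (norm_nonneg x).trans (norm_le_of_mem π hC (norm_mem_decompSet π x))
    have h2 : ‖x‖ ≤ C * ‖x‖ := norm_le_of_mem π hC (norm_mem_decompSet π x)
    nlinarith [norm_nonneg x, invNorm_nonneg π x, invNorm_le_norm π x]
  · rw [← div_le_iff₀' h]
    exact le_csInf (decompSet_nonempty π x) fun r hr =>
      (div_le_iff₀' h).2 (norm_le_of_mem π hC hr)

theorem decompSet_add {x y : E} {r s : ℝ} (hr : r ∈ decompSet π x) (hs : s ∈ decompSet π y) :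
    r + s ∈ decompSet π (x + y) := by
  obtain ⟨l, rfl, rfl⟩ := hr
  obtain ⟨l', rfl, rfl⟩ := hs
  exact ⟨l ++ l', by simp, by simp⟩

theorem invNorm_add_le (x y : E) : invNorm π (x + y) ≤ invNorm π x + invNorm π y := by
  have h : ∀ r ∈ decompSet π x, ∀ s ∈ decompSet π y, invNorm π (x + y) ≤ r + s :=
    fun r hr s hs => invNorm_le π (decompSet_add π hr hs)
  have h2 : ∀ r ∈ decompSet π x, invNorm π (x + y) - r ≤ invNorm π y := fun r hr =>
    le_csInf (decompSet_nonempty π y) fun s hs => by linarith [h r hr s hs]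
  have h3 : invNorm π (x + y) - invNorm π y ≤ invNorm π x :=
    le_csInf (decompSet_nonempty π x) fun r hr => by linarith [h2 r hr]
  linarith

theorem decompSet_smul (c : ℝ) {x : E} {r : ℝ} (hr : r ∈ decompSet π x) :
    |c| * r ∈ decompSet π (c • x) := by
  obtain ⟨l, rfl, rfl⟩ := hr
  refine ⟨l.map fun q => (q.1, c • q.2), ?_, ?_⟩
  · rw [List.map_map, List.smul_sum, List.map_map]
    congr 1
    ext q
    simp
  · rw [List.map_map, ← List.sum_map_mul_left]
    congr 1
    ext q
    simp [norm_smul, Real.norm_eq_abs]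

theorem invNorm_smul (c : ℝ) (x : E) : invNorm π (c • x) = |c| * invNorm π x := by
  rcases eq_or_ne c 0 with rfl | hc
  · simp [invNorm_zero]
  have key : ∀ (c : ℝ), c ≠ 0 → ∀ x : E, invNorm π (c • x) ≤ |c| * invNorm π x := by
    intro c hc x
    have hc' : 0 < |c| := abs_pos.2 hc
    rw [← div_le_iff₀' hc']
    exact le_csInf (decompSet_nonempty π x) fun r hr =>
      (div_le_iff₀' hc').2 (invNorm_le π (decompSet_smul π c hr))
  refine le_antisymm (key c hc x) ?_
  have h2 := key c⁻¹ (inv_ne_zero hc) (c • x)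
  rw [inv_smul_smul₀ hc, abs_inv] at h2
  have h3 := mul_le_mul_of_nonneg_left h2 (abs_nonneg c)
  rw [← mul_assoc, mul_inv_cancel₀ (abs_ne_zero.2 hc), one_mul] at h3
  exact h3

theorem decompSet_apply (g : G) (x : E) : decompSet π x ⊆ decompSet π (π g x) := by
  rintro r ⟨l, rfl, rfl⟩
  refine ⟨l.map fun q => (g * q.1, q.2), ?_, ?_⟩
  · rw [List.map_map, map_list_sum (π g), List.map_map]
    refine congrArg List.sum (List.map_congr_left fun q _ => ?_)
    show (π g) ((π q.1) q.2) = (π (g * q.1)) q.2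
    rw [map_mul]
    rfl
  · rw [List.map_map]
    congr 1

theorem invNorm_apply (g : G) (x : E) : invNorm π (π g x) = invNorm π x := by
  have h1 : decompSet π x ⊆ decompSet π (π g x) := decompSet_apply π g x
  have h2 : decompSet π (π g x) ⊆ decompSet π x := by
    have := decompSet_apply π g⁻¹ (π g x)
    have he : π g⁻¹ (π g x) = x := by
      rw [map_inv]
      exact (π g).symm_apply_apply x
    rwa [he] at this
  rw [invNorm, invNorm, le_antisymm h1 h2]

theorem invNorm_neg (x : E) : invNorm π (-x) = invNorm π x := by
  rw [← neg_one_smul ℝ x, invNorm_smul]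
  simp

theorem invNorm_list_sum_le (l : List E) : invNorm π l.sum ≤ (l.map (invNorm π)).sum := by
  induction l with
  | nil => simp [invNorm_zero]
  | cons a l ih =>
    simp only [List.sum_cons, List.map_cons]
    exact (invNorm_add_le π a l.sum).trans (by linarith)

theorem list_sum_map_add {α M : Type*} [AddCommMonoid M] (l : List α) (f g : α → M) :
    (l.map fun q => f q + g q).sum = (l.map f).sum + (l.map g).sum := by
  induction l with
  | nil => simp
  | cons a l ih => simp only [List.map_cons, List.sum_cons, ih]; abel

theorem list_sum_map_smul {α : Type*} (l : List α) (c : α → ℝ) (v : E) :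
    (l.map fun q => c q • v).sum = ((l.map c).sum) • v := by
  induction l with
  | nil => simp
  | cons a l ih => simp only [List.map_cons, List.sum_cons, ih, add_smul]

theorem core_smooth {p K : ℝ} (hp : 0 < p) (hK : 0 ≤ K)
    (hsm : ∀ τ : ℝ, 0 < τ → modulusOfSmoothnessFor (fun x : E => ‖x‖) τ ≤ K * τ ^ p)
    (a b : E) (ha : a ≠ 0) :
    ‖a + b‖ + ‖a - b‖ ≤ 2 * ‖a‖ + 2 * K * ‖b‖ ^ p * ‖a‖ ^ (1 - p) := by
  have ha' : (0:ℝ) < ‖a‖ := norm_pos_iff.2 ha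
  rcases eq_or_ne b 0 with rfl | hb
  · have h1 : (0:ℝ) ≤ K * ‖a‖ ^ (1 - p) := by positivity
    simp [Real.zero_rpow hp.ne']
    nlinarith
  have hb' : (0:ℝ) < ‖b‖ := norm_pos_iff.2 hb
  set t : ℝ := ‖b‖ / ‖a‖ with ht_def
  have ht : 0 < t := div_pos hb' ha'
  set u : E := ‖a‖⁻¹ • a with hu_def
  set v : E := ‖a‖⁻¹ • b with hv_def
  have hun : ‖u‖ = 1 := by
    rw [hu_def, norm_smul, norm_inv, norm_norm, inv_mul_cancel₀ ha'.ne']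
  have hvn : ‖v‖ = t := by
    rw [hv_def, norm_smul, norm_inv, norm_norm, ht_def, div_eq_inv_mul]
  have hmem : (‖u + v‖ + ‖u - v‖) / 2 - 1 ∈
      {x : ℝ | ∃ u' v' : E, ‖u'‖ ≤ 1 ∧ ‖v'‖ ≤ t ∧ x = (‖u' + v'‖ + ‖u' - v'‖) / 2 - 1} :=
    ⟨u, v, hun.le, hvn.le, rfl⟩
  have hbdd : BddAbove {x : ℝ | ∃ u' v' : E, ‖u'‖ ≤ 1 ∧ ‖v'‖ ≤ t ∧
      x = (‖u' + v'‖ + ‖u' - v'‖) / 2 - 1} := by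
    refine ⟨t, fun x hx => ?_⟩
    obtain ⟨u', v', hu', hv', rfl⟩ := hx
    have h1 : ‖u' + v'‖ ≤ 1 + t := (norm_add_le _ _).trans (by linarith)
    have h2 : ‖u' - v'‖ ≤ 1 + t := (norm_sub_le _ _).trans (by linarith)
    linarith
  have hle : (‖u + v‖ + ‖u - v‖) / 2 - 1 ≤ K * t ^ p := by
    have h1 := le_csSup hbdd hmem
    have h2 := hsm t ht
    rw [modulusOfSmoothnessFor] at h2
    exact h1.trans h2
  -- scale back
  have key : ‖a + b‖ + ‖a - b‖ ≤ 2 * ‖a‖ + 2 * K * t ^ p * ‖a‖ := by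
    have e1 : ‖u + v‖ = ‖a‖⁻¹ * ‖a + b‖ := by
      rw [hu_def, hv_def, ← smul_add, norm_smul, norm_inv, norm_norm]
    have e2 : ‖u - v‖ = ‖a‖⁻¹ * ‖a - b‖ := by
      rw [hu_def, hv_def, ← smul_sub, norm_smul, norm_inv, norm_norm]
    rw [e1, e2] at hle
    have := mul_le_mul_of_nonneg_left hle ha'.le
    have h3 : ‖a‖ * ((‖a‖⁻¹ * ‖a + b‖ + ‖a‖⁻¹ * ‖a - b‖) / 2 - 1)
        = (‖a + b‖ + ‖a - b‖) / 2 - ‖a‖ := by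
      field_simp
    rw [h3] at this
    nlinarith
  have e3 : t ^ p * ‖a‖ = ‖b‖ ^ p * ‖a‖ ^ (1 - p) := by
    rw [ht_def, Real.div_rpow hb'.le ha'.le, Real.rpow_sub ha', Real.rpow_one]
    field_simp
  calc ‖a + b‖ + ‖a - b‖ ≤ 2 * ‖a‖ + 2 * K * t ^ p * ‖a‖ := key
    _ = 2 * ‖a‖ + 2 * K * (t ^ p * ‖a‖) := by ring
    _ = 2 * ‖a‖ + 2 * K * ‖b‖ ^ p * ‖a‖ ^ (1 - p) := by rw [e3]; ring

set_option maxHeartbeats 2000000 in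
theorem invNorm_pair_smooth {p K C : ℝ} (hp₁ : 1 < p) (hp₂ : p ≤ 2) (hK : 0 ≤ K) (hC : 1 ≤ C)
    (hCg : ∀ g : G, ‖(π g : E →L[ℝ] E)‖ ≤ C)
    (hsm : ∀ τ : ℝ, 0 < τ → modulusOfSmoothnessFor (fun x : E => ‖x‖) τ ≤ K * τ ^ p)
    (τ : ℝ) (hτ : 0 < τ) (u v : E) (hu : invNorm π u ≤ 1) (hv : invNorm π v ≤ τ) :
    (invNorm π (u + v) + invNorm π (u - v)) / 2 - 1 ≤ (3 + 2 * K * (C ^ p * C ^ p)) * τ ^ p := by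
  have hp0 : 0 < p := lt_trans one_pos hp₁
  have hτp : 0 < τ ^ p := Real.rpow_pos_of_pos hτ p
  have hCp : (0:ℝ) < C ^ p := Real.rpow_pos_of_pos (lt_of_lt_of_le one_pos hC) p
  have hKfin : (3:ℝ) ≤ 3 + 2 * K * (C ^ p * C ^ p) := by nlinarith
  have hsub : invNorm π (u - v) ≤ invNorm π u + invNorm π v := by
    rw [sub_eq_add_neg]
    exact (invNorm_add_le π u (-v)).trans (by rw [invNorm_neg])
  have hadd : invNorm π (u + v) ≤ invNorm π u + invNorm π v := invNorm_add_le π u v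
  rcases le_or_gt (1/2 : ℝ) τ with hτhalf | hτhalf
  · -- large τ : trivial bound
    have h1 : (invNorm π (u + v) + invNorm π (u - v)) / 2 - 1 ≤ τ := by linarith
    have h2 : τ ≤ 2 * τ ^ p := by
      have e1 : τ ^ (p - 1) = τ ^ p / τ := by rw [Real.rpow_sub hτ, Real.rpow_one]
      have e2 : ((1:ℝ)/2) ^ (p - 1) ≤ τ ^ (p - 1) :=
        Real.rpow_le_rpow (by norm_num) hτhalf (by linarith)
      have e3 : ((1:ℝ)/2) ^ (1:ℝ) ≤ ((1:ℝ)/2) ^ (p - 1) :=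
        Real.rpow_le_rpow_of_exponent_ge (by norm_num) (by norm_num) (by linarith)
      rw [Real.rpow_one] at e3
      have e4 : (1:ℝ)/2 ≤ τ ^ p / τ := by rw [← e1]; linarith
      have e5 := (le_div_iff₀ hτ).1 e4
      linarith
    nlinarith
  · -- small τ
    obtain ⟨S, hSmem, hSlt⟩ := exists_lt_of_csInf_lt (decompSet_nonempty π u)
      (show sInf (decompSet π u) < invNorm π u + τ ^ p by
        rw [← invNorm]; linarith)
    have hS0 : 0 ≤ S := decompSet_nonneg π hSmem
    have huS : invNorm π u ≤ S := invNorm_le π hSmem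
    rcases le_or_gt S (1/2 : ℝ) with hShalf | hShalf
    · have h1 : invNorm π (u + v) ≤ S + τ := by linarith
      have h2 : invNorm π (u - v) ≤ S + τ := by linarith
      nlinarith
    · -- main case
      obtain ⟨l, hul, hSl⟩ := hSmem
      have hSpos : (0:ℝ) < S := by linarith
      set D : ℝ := K * (C ^ p * C ^ p) * τ ^ p / S ^ p with hD_def
      have hSp : (0:ℝ) < S ^ p := Real.rpow_pos_of_pos hSpos p
      have hD0 : 0 ≤ D := by positivity
      -- the two decompositions of u ± v
      have hvle : ‖v‖ ≤ C * τ := by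
        calc ‖v‖ ≤ C * invNorm π v := norm_le_mul_invNorm π hCg v
          _ ≤ C * τ := by nlinarith
      -- per-term bound
      have hterm : ∀ q ∈ l,
          invNorm π (π q.1 q.2 + (‖q.2‖ / S) • v) + invNorm π (π q.1 q.2 - (‖q.2‖ / S) • v)
            ≤ 2 * (1 + D) * ‖q.2‖ := by
        intro q _
        rcases eq_or_ne q.2 0 with hq2 | hq2
        · rw [hq2]
          simp [invNorm_zero]
        · have hy : (0:ℝ) < ‖q.2‖ := norm_pos_iff.2 hq2
          set w : E := (‖q.2‖ / S) • (π q.1⁻¹) v with hw_def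
          have hfix : (π q.1) ((π q.1⁻¹) v) = v := by
            rw [map_inv]; exact (π q.1).apply_symm_apply v
          have e1 : π q.1 q.2 + (‖q.2‖ / S) • v = π q.1 (q.2 + w) := by
            rw [map_add, map_smul, hfix]
          have e2 : π q.1 q.2 - (‖q.2‖ / S) • v = π q.1 (q.2 - w) := by
            rw [map_sub, map_smul, hfix]
          have hwle : ‖w‖ ≤ ‖q.2‖ / S * (C * (C * τ)) := by
            rw [hw_def, norm_smul, Real.norm_eq_abs, abs_of_nonneg (by positivity)]
            have h3 : ‖(π q.1⁻¹) v‖ ≤ C * ‖v‖ :=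
              ((π q.1⁻¹ : E →L[ℝ] E).le_opNorm v).trans
                (mul_le_mul_of_nonneg_right (hCg q.1⁻¹) (norm_nonneg _))
            have h4 : ‖(π q.1⁻¹) v‖ ≤ C * (C * τ) :=
              h3.trans (by nlinarith)
            exact mul_le_mul_of_nonneg_left h4 (by positivity)
          have hcore := core_smooth hp0 hK hsm q.2 w hq2
          have hWp : ‖w‖ ^ p ≤ (‖q.2‖ / S * (C * (C * τ))) ^ p :=
            Real.rpow_le_rpow (norm_nonneg w) hwle hp0.le
          have hA : (‖q.2‖ / S * (C * (C * τ))) ^ p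
              = ‖q.2‖ ^ p / S ^ p * (C ^ p * (C ^ p * τ ^ p)) := by
            rw [Real.mul_rpow (by positivity) (by positivity),
              Real.div_rpow hy.le hSpos.le,
              Real.mul_rpow (by positivity) (by positivity),
              Real.mul_rpow (by positivity) hτ.le]
          have hB : ‖q.2‖ ^ p * ‖q.2‖ ^ (1 - p) = ‖q.2‖ := by
            rw [← Real.rpow_add hy, show p + (1 - p) = 1 by ring, Real.rpow_one]
          have h6 : (0:ℝ) ≤ ‖q.2‖ ^ (1 - p) := Real.rpow_nonneg hy.le _
          have h5 : K * ‖w‖ ^ p * ‖q.2‖ ^ (1 - p) ≤ D * ‖q.2‖ := by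
            have h5a : K * ‖w‖ ^ p * ‖q.2‖ ^ (1 - p)
                ≤ K * (‖q.2‖ / S * (C * (C * τ))) ^ p * ‖q.2‖ ^ (1 - p) :=
              mul_le_mul_of_nonneg_right (mul_le_mul_of_nonneg_left hWp hK) h6
            have h5b : K * (‖q.2‖ / S * (C * (C * τ))) ^ p * ‖q.2‖ ^ (1 - p) = D * ‖q.2‖ := by
              rw [hA, hD_def]
              field_simp
              linear_combination K * hB
            linarith [h5a.trans_eq h5b]
          have h7 : invNorm π (π q.1 q.2 + (‖q.2‖ / S) • v) ≤ ‖q.2 + w‖ := by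
            rw [e1, invNorm_apply]
            exact invNorm_le_norm π _
          have h8 : invNorm π (π q.1 q.2 - (‖q.2‖ / S) • v) ≤ ‖q.2 - w‖ := by
            rw [e2, invNorm_apply]
            exact invNorm_le_norm π _
          have hgoal : 2 * (1 + D) * ‖q.2‖ = 2 * ‖q.2‖ + 2 * (D * ‖q.2‖) := by ring
          rw [hgoal]
          linarith [h7, h8, hcore, h5]
      -- sum identities
      have hsum1 : (l.map fun q => π q.1 q.2 + (‖q.2‖ / S) • v).sum = u + v := by
        rw [list_sum_map_add l (fun q => π q.1 q.2) (fun q => (‖q.2‖ / S) • v), ← hul,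
          list_sum_map_smul l (fun q => ‖q.2‖ / S) v]
        have : (l.map fun q => ‖q.2‖ / S).sum = 1 := by
          simp only [div_eq_mul_inv]
          rw [List.sum_map_mul_right, ← hSl, mul_inv_cancel₀ hSpos.ne']
        rw [this, one_smul]
      have hsum2 : (l.map fun q => π q.1 q.2 - (‖q.2‖ / S) • v).sum = u - v := by
        have : (l.map fun q => π q.1 q.2 - (‖q.2‖ / S) • v)
            = l.map fun q => π q.1 q.2 + (‖q.2‖ / S) • (-v) := by
          refine List.map_congr_left fun q _ => ?_
          rw [smul_neg, sub_eq_add_neg]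
        rw [this]
        have h9 : (l.map fun q => π q.1 q.2 + (‖q.2‖ / S) • (-v)).sum = u + -v := by
          rw [list_sum_map_add l (fun q => π q.1 q.2) (fun q => (‖q.2‖ / S) • (-v)), ← hul,
            list_sum_map_smul l (fun q => ‖q.2‖ / S) (-v)]
          have : (l.map fun q => ‖q.2‖ / S).sum = 1 := by
            simp only [div_eq_mul_inv]
            rw [List.sum_map_mul_right, ← hSl, mul_inv_cancel₀ hSpos.ne']
          rw [this, one_smul]
        rw [h9, ← sub_eq_add_neg]
      -- subadditivity over the decomposition
      have hb1 : invNorm π (u + v) ≤ (l.map fun q => invNorm π (π q.1 q.2 + (‖q.2‖ / S) • v)).sum := by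
        rw [← hsum1]
        have := invNorm_list_sum_le π (l.map fun q => π q.1 q.2 + (‖q.2‖ / S) • v)
        rwa [List.map_map] at this
      have hb2 : invNorm π (u - v) ≤ (l.map fun q => invNorm π (π q.1 q.2 - (‖q.2‖ / S) • v)).sum := by
        rw [← hsum2]
        have := invNorm_list_sum_le π (l.map fun q => π q.1 q.2 - (‖q.2‖ / S) • v)
        rwa [List.map_map] at this
      have hsum_le : (l.map fun q => invNorm π (π q.1 q.2 + (‖q.2‖ / S) • v)).sum
          + (l.map fun q => invNorm π (π q.1 q.2 - (‖q.2‖ / S) • v)).sum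
          ≤ 2 * (1 + D) * S := by
        have h10 : (l.map fun q => invNorm π (π q.1 q.2 + (‖q.2‖ / S) • v)
              + invNorm π (π q.1 q.2 - (‖q.2‖ / S) • v)).sum
            ≤ (l.map fun q => 2 * (1 + D) * ‖q.2‖).sum :=
          List.sum_le_sum hterm
        rw [list_sum_map_add] at h10
        rw [List.sum_map_mul_left, ← hSl] at h10
        exact h10
      -- putting it together
      have hDS : D * S ≤ 2 * (K * (C ^ p * C ^ p) * τ ^ p) := by
        have e4 : D * S = K * (C ^ p * C ^ p) * τ ^ p * S ^ (1 - p) := by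
          rw [hD_def, Real.rpow_sub hSpos, Real.rpow_one]
          field_simp
        have e5 : S ^ (1 - p) ≤ 2 := by
          have h11 : S ^ (1 - p) = (S ^ (p - 1))⁻¹ := by
            rw [show (1:ℝ) - p = -(p - 1) by ring, Real.rpow_neg hSpos.le]
          have h12 : ((1:ℝ)/2) ^ (p - 1) ≤ S ^ (p - 1) :=
            Real.rpow_le_rpow (by norm_num) hShalf.le (by linarith)
          have h13 : (0:ℝ) < ((1:ℝ)/2) ^ (p - 1) := Real.rpow_pos_of_pos (by norm_num) _
          have h14 : (S ^ (p - 1))⁻¹ ≤ (((1:ℝ)/2) ^ (p - 1))⁻¹ :=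
            inv_anti₀ h13 h12
          have h15 : (((1:ℝ)/2) ^ (p - 1))⁻¹ = 2 ^ (p - 1) := by
            rw [show ((1:ℝ)/2) = 2⁻¹ by norm_num, Real.inv_rpow (by norm_num), inv_inv]
          have h16 : (2:ℝ) ^ (p - 1) ≤ 2 ^ (1:ℝ) :=
            Real.rpow_le_rpow_of_exponent_le (by norm_num) (by linarith)
          rw [Real.rpow_one] at h16
          rw [h11]
          linarith [h14.trans_eq h15]
        have h17 : K * (C ^ p * C ^ p) * τ ^ p * S ^ (1 - p)
            ≤ K * (C ^ p * C ^ p) * τ ^ p * 2 :=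
          mul_le_mul_of_nonneg_left e5
            (mul_nonneg (mul_nonneg hK (mul_nonneg hCp.le hCp.le)) hτp.le)
        rw [e4]
        exact h17.trans_eq (mul_comm _ 2)
      have hfinal : (invNorm π (u + v) + invNorm π (u - v)) / 2 - 1 ≤ S - 1 + D * S := by
        have h20 : invNorm π (u + v) + invNorm π (u - v) ≤ 2 * (1 + D) * S :=
          le_trans (add_le_add hb1 hb2) hsum_le
        have h21 : 2 * (1 + D) * S = 2 * S + 2 * (D * S) := by ring
        rw [h21] at h20
        linarith
      have hS1 : S < 1 + τ ^ p := by linarith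
      calc (invNorm π (u + v) + invNorm π (u - v)) / 2 - 1 ≤ S - 1 + D * S := hfinal
        _ ≤ τ ^ p + 2 * (K * (C ^ p * C ^ p) * τ ^ p) := by linarith
        _ ≤ (3 + 2 * K * (C ^ p * C ^ p)) * τ ^ p := by nlinarith [hτp.le, hτp]

theorem invNorm_modulus {p K C : ℝ} (hp₁ : 1 < p) (hp₂ : p ≤ 2) (hK : 0 ≤ K) (hC : 1 ≤ C)
    (hCg : ∀ g : G, ‖(π g : E →L[ℝ] E)‖ ≤ C)
    (hsm : ∀ τ : ℝ, 0 < τ → modulusOfSmoothnessFor (fun x : E => ‖x‖) τ ≤ K * τ ^ p)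
    (τ : ℝ) (hτ : 0 < τ) :
    modulusOfSmoothnessFor (invNorm π) τ ≤ (3 + 2 * K * (C ^ p * C ^ p)) * τ ^ p := by
  have hCp : (0:ℝ) < C ^ p := Real.rpow_pos_of_pos (lt_of_lt_of_le one_pos hC) p
  have hτp : (0:ℝ) < τ ^ p := Real.rpow_pos_of_pos hτ p
  have hpos : (0:ℝ) ≤ (3 + 2 * K * (C ^ p * C ^ p)) * τ ^ p := by
    have : (0:ℝ) ≤ 3 + 2 * K * (C ^ p * C ^ p) := by nlinarith
    exact mul_nonneg this hτp.le
  rw [modulusOfSmoothnessFor]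
  refine Real.sSup_le ?_ hpos
  rintro x ⟨u, v, hu, hv, rfl⟩
  exact invNorm_pair_smooth π hp₁ hp₂ hK hC hCg hsm τ hτ u v hu hv

end Aux

/-- Let `G` act on a `p`-uniformly smooth Banach space `E` (`1 < p ≤ 2`) by
uniformly bounded invertible operators, via `π : G → GL(E)` with `sup_g ‖π g‖ < ∞`. Then there
is a norm `N` on `E`, equivalent to the original one, which is `G`-invariant and `p`-uniformly
smooth. -/
theorem exists_invariant_uniformly_smooth_norm
    {G : Type*} [Group G]
    {E : Type*} [NormedAddCommGroup E] [NormedSpace ℝ E] [CompleteSpace E]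
    (p : ℝ) (hp₁ : 1 < p) (hp₂ : p ≤ 2)
    (hsmooth : ∃ K : ℝ, ∀ τ : ℝ, 0 < τ →
      modulusOfSmoothnessFor (fun x : E => ‖x‖) τ ≤ K * τ ^ p)
    (π : G →* (E ≃L[ℝ] E))
    (hπub : ∃ C : ℝ, ∀ g : G, ‖(π g : E →L[ℝ] E)‖ ≤ C) :
    ∃ N : E → ℝ,
      -- `N` is a norm on `E`
      (∀ x : E, 0 ≤ N x) ∧
      (∀ x : E, N x = 0 ↔ x = 0) ∧
      (∀ (c : ℝ) (x : E), N (c • x) = |c| * N x) ∧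
      (∀ x y : E, N (x + y) ≤ N x + N y) ∧
      -- `N` is equivalent to the original norm
      (∃ c₁ c₂ : ℝ, 0 < c₁ ∧ 0 < c₂ ∧ ∀ x : E, c₁ * ‖x‖ ≤ N x ∧ N x ≤ c₂ * ‖x‖) ∧
      -- `N` is `G`-invariant
      (∀ (g : G) (x : E), N (π g x) = N x) ∧
      -- `N` is `p`-uniformly smooth
      (∃ K : ℝ, ∀ τ : ℝ, 0 < τ → modulusOfSmoothnessFor N τ ≤ K * τ ^ p) := by
  obtain ⟨K₀, hK₀⟩ := hsmooth
  obtain ⟨C₀, hC₀⟩ := hπub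
  set C : ℝ := max C₀ 1 with hC_def
  have hC : (1:ℝ) ≤ C := le_max_right _ _
  have hC0 : (0:ℝ) < C := lt_of_lt_of_le one_pos hC
  have hCg : ∀ g : G, ‖(π g : E →L[ℝ] E)‖ ≤ C := fun g => (hC₀ g).trans (le_max_left _ _)
  set K : ℝ := max K₀ 0 with hK_def
  have hK : (0:ℝ) ≤ K := le_max_right _ _
  have hsm : ∀ τ : ℝ, 0 < τ → modulusOfSmoothnessFor (fun x : E => ‖x‖) τ ≤ K * τ ^ p :=
    fun τ hτ => (hK₀ τ hτ).trans (mul_le_mul_of_nonneg_right (le_max_left _ _)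
      (Real.rpow_pos_of_pos hτ p).le)
  refine ⟨invNorm π, invNorm_nonneg π, ?_, invNorm_smul π, invNorm_add_le π,
    ⟨C⁻¹, 1, inv_pos.2 hC0, one_pos, ?_⟩, invNorm_apply π,
    ⟨3 + 2 * K * (C ^ p * C ^ p), fun τ hτ =>
      invNorm_modulus π hp₁ hp₂ hK hC hCg hsm τ hτ⟩⟩
  · intro x
    constructor
    · intro h
      have h1 := norm_le_mul_invNorm π hCg x
      rw [h, mul_zero] at h1
      exact norm_le_zero_iff.1 h1
    · rintro rfl
      exact invNorm_zero π
  · intro x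
    constructor
    · have h1 := norm_le_mul_invNorm π hCg x
      rw [inv_mul_le_iff₀ hC0]
      exact h1
    · rw [one_mul]
      exact invNorm_le_norm π x
end

section
/- Let G be a locally compact, compactly generated topological group with an open, relatively compact, symmetric generating set S (so that the balls {g : |g|_S ≤ n} are relatively compact), and let f, h : G → [0, ∞). Then f ≺ h (i.e. for every ε > 0 there exists a compact subset K ⊆ G such that f(g) ≤ ε h(g) for all g ∉ K) if and only if there exists a measurable nondecreasing map η : [0, ∞) → [0, ∞) with η(x) → ∞ as x → ∞ such that f(g) · η(|g|_S) ≤ h(g) for all g ∈ G. -/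
open Pointwise Filter

/-- The word length of `g` with respect to a generating set `S`:
`|g|_S = min {n : g ∈ S^n}` (with `S^0 = {1}`). -/
noncomputable def wordLength {G : Type*} [Group G] (S : Set G) (g : G) : ℕ :=
  sInf {n : ℕ | g ∈ S ^ n}

lemma wordLength_le {G : Type*} [Group G] (S : Set G) {g : G} {n : ℕ} (hg : g ∈ S ^ n) :
    wordLength S g ≤ n := Nat.sInf_le hg

lemma mem_pow_wordLength {G : Type*} [Group G] (S : Set G) {g : G} (hg : ∃ n : ℕ, g ∈ S ^ n) :
    g ∈ S ^ (wordLength S g) := Nat.sInf_mem hg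

/-- Every compact set is contained in a ball of the word metric. -/
lemma exists_wordLength_bound {G : Type*} [Group G] [TopologicalSpace G] [IsTopologicalGroup G]
    (S : Set G) (hSopen : IsOpen S) (hSsymm : S⁻¹ = S)
    (hSgen : ∀ g : G, ∃ n : ℕ, g ∈ S ^ n) {K : Set G} (hK : IsCompact K) :
    ∃ N : ℕ, ∀ g ∈ K, wordLength S g ≤ N := by
  rcases S.eq_empty_or_nonempty with hS | ⟨s, hs⟩
  · refine ⟨0, fun g _ => ?_⟩
    obtain ⟨n, hn⟩ := hSgen g
    rcases Nat.eq_zero_or_pos n with rfl | hpos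
    · exact wordLength_le S hn
    · rw [hS, Set.empty_pow hpos.ne'] at hn
      exact absurd hn (Set.notMem_empty g)
  · have hsinv : s⁻¹ ∈ S := by rw [← hSsymm]; exact Set.inv_mem_inv.mpr hs
    have hone : (1 : G) ∈ S ^ 2 := by
      rw [sq]
      exact ⟨s, hs, s⁻¹, hsinv, mul_inv_cancel s⟩
    have hopen : ∀ n : ℕ, IsOpen (S ^ (n + 1)) := by
      intro n
      rw [pow_succ]
      exact hSopen.mul_left
    have hcover : K ⊆ ⋃ n : ℕ, S ^ (n + 1) := by
      intro g _
      obtain ⟨n, hn⟩ := hSgen g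
      rcases n with _ | m
      · have : g = 1 := by simpa using hn
        exact Set.mem_iUnion.2 ⟨1, this ▸ hone⟩
      · exact Set.mem_iUnion.2 ⟨m, hn⟩
    obtain ⟨F, hF⟩ := hK.elim_finite_subcover (fun n : ℕ => S ^ (n + 1))
      (fun n => hopen n) hcover
    refine ⟨F.sup id + 1, fun g hg => ?_⟩
    obtain ⟨n, hnF, hgn⟩ := Set.mem_iUnion₂.1 (hF hg)
    exact le_trans (wordLength_le S hgn) (by
      have : n ≤ F.sup id := Finset.le_sup (f := id) hnF
      omega)

/-- Closed balls of the word metric are contained in a compact set. -/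
lemma exists_compact_ball {G : Type*} [Group G] [TopologicalSpace G] [IsTopologicalGroup G]
    (S : Set G) (hSrc : IsCompact (closure S)) (hSgen : ∀ g : G, ∃ n : ℕ, g ∈ S ^ n) (N : ℕ) :
    ∃ K : Set G, IsCompact K ∧ ∀ g : G, g ∉ K → N < wordLength S g := by
  have hpow : ∀ j : ℕ, IsCompact ((closure S) ^ j) := by
    intro j
    induction j with
    | zero =>
      rw [pow_zero]
      exact isCompact_singleton
    | succ j ih => rw [pow_succ]; exact ih.mul hSrc
  refine ⟨⋃ j ∈ Set.Iic N, (closure S) ^ j,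
    (Set.finite_Iic N).isCompact_biUnion (fun j _ => hpow j), ?_⟩
  intro g hg
  by_contra hle
  push_neg at hle
  have hmem : g ∈ S ^ (wordLength S g) := mem_pow_wordLength S (hSgen g)
  have : g ∈ (closure S) ^ (wordLength S g) :=
    Set.pow_subset_pow_left subset_closure hmem
  exact hg (Set.mem_biUnion hle this)

/-- Let `G` be a locally compact, compactly generated topological group with
an open, relatively compact, symmetric generating set `S`, and `f, h : G → [0, ∞)`. Then
`f ≺ h` (for every `ε > 0` there is a compact `K ⊆ G` with `f ≤ ε h` off `K`) if and only if
there is a measurable nondecreasing `η : [0,∞) → [0,∞)` with `η(x) → ∞` as `x → ∞` such that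
`f(g) · η(|g|_S) ≤ h(g)` for all `g ∈ G`. -/
theorem prec_iff_exists_eta
    {G : Type*} [Group G] [TopologicalSpace G] [IsTopologicalGroup G] [LocallyCompactSpace G]
    (S : Set G) (hSopen : IsOpen S) (hSrc : IsCompact (closure S)) (hSsymm : S⁻¹ = S)
    (hSgen : ∀ g : G, ∃ n : ℕ, g ∈ S ^ n)
    (f h : G → ℝ) (hf : ∀ g, 0 ≤ f g) (hh : ∀ g, 0 ≤ h g) :
    (∀ ε : ℝ, 0 < ε → ∃ K : Set G, IsCompact K ∧ ∀ g ∉ K, f g ≤ ε * h g) ↔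
    (∃ η : ℝ → ℝ, Measurable η ∧ (∀ x : ℝ, 0 ≤ x → 0 ≤ η x) ∧
      MonotoneOn η (Set.Ici (0 : ℝ)) ∧
      Tendsto η atTop atTop ∧
      ∀ g : G, f g * η (wordLength S g : ℝ) ≤ h g) := by
  constructor
  · intro hyp
    -- for each k pick a radius m k ≥ k outside whose ball f·k ≤ h
    have hchoice : ∀ k : ℕ, ∃ m : ℕ, k ≤ m ∧
        ∀ g : G, (m : ℝ) < (wordLength S g : ℝ) → f g * (k : ℝ) ≤ h g := by
      intro k
      rcases Nat.eq_zero_or_pos k with rfl | hk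
      · exact ⟨0, le_refl 0, fun g _ => by simpa using hh g⟩
      · obtain ⟨K, hKc, hKp⟩ := hyp (1 / (k : ℝ)) (by positivity)
        obtain ⟨N, hN⟩ := exists_wordLength_bound S hSopen hSsymm hSgen hKc
        refine ⟨max N k, le_max_right N k, fun g hg => ?_⟩
        have hgK : g ∉ K := by
          intro hgK
          have h1 : wordLength S g ≤ N := hN g hgK
          have h2 : (max N k : ℕ) < wordLength S g := by exact_mod_cast hg
          omega
        have hfg : f g ≤ (1 / (k : ℝ)) * h g := hKp g hgK
        have hkpos : (0 : ℝ) < (k : ℝ) := by exact_mod_cast hk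
        calc f g * (k : ℝ) ≤ ((1 / (k : ℝ)) * h g) * (k : ℝ) :=
              mul_le_mul_of_nonneg_right hfg hkpos.le
          _ = h g := by field_simp
    choose m hm hmprop using hchoice
    -- the set of levels reached before x
    set A : ℝ → Set ℕ := fun x => {k : ℕ | 1 ≤ k ∧ (m k : ℝ) < x} with hA
    have hbdd : ∀ x : ℝ, BddAbove (A x) := by
      intro x
      refine ⟨⌈x⌉₊, fun k hk => ?_⟩
      have h1 : (k : ℝ) ≤ (m k : ℝ) := by exact_mod_cast hm k
      exact (Nat.lt_ceil.mpr (lt_of_le_of_lt h1 hk.2)).le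
    have key : ∀ x y : ℝ, x ≤ y → sSup (A x) ≤ sSup (A y) := by
      intro x y hxy
      rcases (A x).eq_empty_or_nonempty with he | hne
      · rw [he, csSup_empty]; exact bot_le
      · exact csSup_le_csSup (hbdd y) hne (fun k hk => ⟨hk.1, lt_of_lt_of_le hk.2 hxy⟩)
    have hmono : Monotone (fun x : ℝ => ((sSup (A x) : ℕ) : ℝ)) := by
      intro x y hxy
      exact Nat.cast_le.mpr (key x y hxy)
    refine ⟨fun x => ((sSup (A x) : ℕ) : ℝ), hmono.measurable, fun x _ => Nat.cast_nonneg _,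
      hmono.monotoneOn _, ?_, ?_⟩
    · -- tends to infinity
      rw [tendsto_atTop_atTop]
      intro b
      set k := ⌈b⌉₊ + 1 with hk
      refine ⟨(m k : ℝ) + 1, fun x hx => ?_⟩
      have hkA : k ∈ A x := ⟨by omega, by linarith⟩
      have h1 : k ≤ sSup (A x) := le_csSup (hbdd x) hkA
      have h2 : b ≤ (k : ℝ) := le_trans (Nat.le_ceil b) (by rw [hk]; push_cast; linarith)
      exact le_trans h2 (by exact_mod_cast h1)
    · -- the main inequality
      intro g
      set w : ℝ := (wordLength S g : ℝ) with hw
      show f g * ((sSup (A w) : ℕ) : ℝ) ≤ h g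
      rcases (A w).eq_empty_or_nonempty with he | hne
      · rw [he, csSup_empty]
        simpa using hh g
      · have hmem : sSup (A w) ∈ A w := Nat.sSup_mem hne (hbdd w)
        exact hmprop (sSup (A w)) g hmem.2
  · rintro ⟨η, _, _, _, hηtop, hηle⟩
    intro ε hε
    obtain ⟨M, hM⟩ := (tendsto_atTop_atTop.mp hηtop) (1 / ε)
    obtain ⟨K, hKc, hKp⟩ := exists_compact_ball S hSrc hSgen ⌈M⌉₊
    refine ⟨K, hKc, fun g hg => ?_⟩
    have hwl : (⌈M⌉₊ : ℕ) < wordLength S g := hKp g hg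
    have hMw : M ≤ (wordLength S g : ℝ) := by
      have : (⌈M⌉₊ : ℝ) < (wordLength S g : ℝ) := by exact_mod_cast hwl
      linarith [Nat.le_ceil M]
    have hη : 1 / ε ≤ η (wordLength S g : ℝ) := hM _ hMw
    have h1 : f g * (1 / ε) ≤ f g * η (wordLength S g : ℝ) :=
      mul_le_mul_of_nonneg_left hη (hf g)
    have h2 : f g * (1 / ε) ≤ h g := le_trans h1 (hηle g)
    calc f g = (f g * (1 / ε)) * ε := by field_simp
      _ ≤ h g * ε := mul_le_mul_of_nonneg_right h2 hε.le
      _ = ε * h g := mul_comm _ _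
end

section
/- Let G be a locally compact, compactly generated topological group, let (π, B) be an isometric representation of G on a Banach space B (a homomorphism into the group of invertible linear isometries of B, continuous in the strong operator topology), and let K ⊆ G be a compact subgroup. Suppose the subspace B^K = {v ∈ B : π(k)v = v for all k ∈ K} of K-fixed vectors is finite dimensional. If (π, B) almost has invariant vectors, then there exists a nonzero vector v ∈ B with π(g)v = v for all g ∈ G. Equivalently, either (π, B) does not have almost invariant vectors, or π contains a nonzero G-invariant vector. -/
open Pointwise

/-- The submodule of vectors fixed by every element of the subgroup `K` under the
representation `π`. -/
def fixedSubmodule {G : Type*} [Group G] {B : Type*} [NormedAddCommGroup B] [NormedSpace ℝ B]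
    (π : G →* (B ≃L[ℝ] B)) (K : Subgroup G) : Submodule ℝ B where
  carrier := {v : B | ∀ k ∈ K, π k v = v}
  add_mem' := by
    intro a b ha hb k hk
    simp [map_add, ha k hk, hb k hk]
  zero_mem' := by
    intro k hk
    simp
  smul_mem' := by
    intro c x hx k hk
    simp [map_smul, hx k hk]

/-- Let `G` be a locally compact, compactly generated topological group,
`(π, B)` an isometric representation of `G` on a Banach space `B` (continuous in the strong
operator topology), and `K ⊆ G` a compact subgroup such that the space `B^K` of `K`-fixed
vectors is finite dimensional. If `(π, B)` almost has invariant vectors, then there exists a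
nonzero `G`-invariant vector. -/
theorem exists_invariant_vector_of_almost_invariant
    {G : Type*} [Group G] [TopologicalSpace G] [IsTopologicalGroup G] [LocallyCompactSpace G]
    {B : Type*} [NormedAddCommGroup B] [NormedSpace ℝ B] [CompleteSpace B]
    (hcg : ∃ Q : Set G, IsCompact Q ∧ Q⁻¹ = Q ∧ ∀ g : G, ∃ n : ℕ, g ∈ Q ^ n)
    (π : G →* (B ≃L[ℝ] B))
    (hπiso : ∀ (g : G) (v : B), ‖π g v‖ = ‖v‖)
    (hπcont : ∀ v : B, Continuous fun g : G => π g v)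
    (K : Subgroup G) (hK : IsCompact (K : Set G))
    (hfd : FiniteDimensional ℝ (fixedSubmodule π K))
    (hai : ∀ Q : Set G, IsCompact Q → ∀ ε : ℝ, 0 < ε →
      ∃ v : B, v ≠ 0 ∧ ∀ g ∈ Q, ‖π g v - v‖ < ε * ‖v‖) :
    ∃ v : B, v ≠ 0 ∧ ∀ g : G, π g v = v := by
  classical
  obtain ⟨Q, hQc, hQsym, hQgen⟩ := hcg
  -- Set up the Haar probability measure on the compact subgroup `K`.
  letI : MeasurableSpace K := borel K
  haveI : BorelSpace K := ⟨rfl⟩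
  haveI : CompactSpace K := isCompact_iff_compactSpace.mp hK
  haveI : Nonempty K := ⟨1⟩
  set μ : MeasureTheory.Measure K := MeasureTheory.Measure.haarMeasure ⊤ with hμdef
  haveI hμprob : MeasureTheory.IsProbabilityMeasure μ := by
    constructor
    have := MeasureTheory.Measure.haarMeasure_self (K₀ := (⊤ : TopologicalSpace.PositiveCompacts K))
    simpa using this
  -- The averaging operator over `K`.
  set P : B → B := fun u => ∫ k : K, π (k : G) u ∂μ with hPdef
  have hintegrable : ∀ u : B, MeasureTheory.Integrable (fun k : K => π (k : G) u) μ := by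
    intro u
    have hc : Continuous fun k : K => π (k : G) u := (hπcont u).comp continuous_subtype_val
    rw [← MeasureTheory.integrableOn_univ]
    exact hc.continuousOn.integrableOn_compact' isCompact_univ MeasurableSet.univ
  -- `P u` is `K`-invariant.
  have hPfixed : ∀ u : B, P u ∈ fixedSubmodule π K := by
    intro u k₀ hk₀
    have h1 : π k₀ (P u) = ∫ k : K, π k₀ (π (k : G) u) ∂μ :=
      (ContinuousLinearEquiv.integral_comp_comm (π k₀) _).symm
    have h2 : (fun k : K => π k₀ (π (k : G) u)) =
        fun k : K => π (((⟨k₀, hk₀⟩ : K) * k : K) : G) u := by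
      funext k
      simp only [Subgroup.coe_mul, map_mul]
      rfl
    rw [h1, h2]
    exact MeasureTheory.integral_mul_left_eq_self (fun k : K => π (k : G) u) ⟨k₀, hk₀⟩
  -- Distance from `u` to `P u` is controlled by near-invariance under `K`.
  have hPclose : ∀ (u : B) (c : ℝ), 0 ≤ c → (∀ k ∈ K, ‖π k u - u‖ ≤ c) → ‖P u - u‖ ≤ c := by
    intro u c hc hbound
    have hconst : (∫ _ : K, u ∂μ) = u := by
      simp [MeasureTheory.integral_const]
    have : P u - u = ∫ k : K, (π (k : G) u - u) ∂μ := by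
      rw [MeasureTheory.integral_sub (hintegrable u) (MeasureTheory.integrable_const u), hconst]
    rw [this]
    calc ‖∫ k : K, (π (k : G) u - u) ∂μ‖ ≤ c * (μ Set.univ).toReal := by
          apply MeasureTheory.norm_integral_le_of_norm_le_const
          filter_upwards with k
          exact hbound (k : G) k.2
      _ = c := by simp
  -- Construct almost invariant unit vectors.
  have hQK : IsCompact (Q ∪ (K : Set G)) := hQc.union hK
  have hseq : ∀ n : ℕ, ∃ u : B, ‖u‖ = 1 ∧
      ∀ g ∈ Q ∪ (K : Set G), ‖π g u - u‖ < 1 / (n + 1) := by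
    intro n
    obtain ⟨v, hv0, hv⟩ := hai (Q ∪ (K : Set G)) hQK (1 / (n + 1)) (by positivity)
    have hvnorm : (0 : ℝ) < ‖v‖ := norm_pos_iff.mpr hv0
    refine ⟨‖v‖⁻¹ • v, ?_, ?_⟩
    · simp [norm_smul, abs_of_pos (inv_pos.mpr hvnorm), inv_mul_cancel₀ hvnorm.ne']
    · intro g hg
      have : π g (‖v‖⁻¹ • v) - ‖v‖⁻¹ • v = ‖v‖⁻¹ • (π g v - v) := by
        rw [map_smul, smul_sub]
      rw [this, norm_smul, Real.norm_eq_abs, abs_of_pos (inv_pos.mpr hvnorm)]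
      calc ‖v‖⁻¹ * ‖π g v - v‖ < ‖v‖⁻¹ * (1 / (n + 1) * ‖v‖) := by
            exact mul_lt_mul_of_pos_left (hv g hg) (inv_pos.mpr hvnorm)
        _ = 1 / (n + 1) := by field_simp
  choose u hu1 huQK using hseq
  -- The averaged vectors.
  set w : ℕ → B := fun n => P (u n) with hwdef
  have hwK : ∀ n, w n ∈ fixedSubmodule π K := fun n => hPfixed (u n)
  have hwu : ∀ n, ‖w n - u n‖ ≤ 1 / (n + 1) := by
    intro n
    refine hPclose (u n) _ (by positivity) ?_
    intro k hk
    exact (huQK n k (Or.inr hk)).le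
  have hwnorm_le : ∀ n, ‖w n‖ ≤ 1 + 1 / (n + 1) := by
    intro n
    calc ‖w n‖ = ‖u n + (w n - u n)‖ := by congr 1; abel
      _ ≤ ‖u n‖ + ‖w n - u n‖ := norm_add_le _ _
      _ ≤ 1 + 1 / (n + 1) := by rw [hu1 n]; exact add_le_add_right (hwu n) 1
  have hwnorm_ge : ∀ n, 1 - 1 / (n + 1) ≤ ‖w n‖ := by
    intro n
    have h1 : ‖u n‖ - ‖w n - u n‖ ≤ ‖w n‖ := by
      have := norm_sub_norm_le (w n) (u n)
      have h2 : ‖w n‖ - ‖u n‖ ≥ -‖w n - u n‖ := by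
        have := abs_norm_sub_norm_le (w n) (u n)
        nlinarith [abs_le.mp this]
      linarith
    have := hwu n
    rw [hu1 n] at h1
    linarith
  have hwQ : ∀ n, ∀ g ∈ Q, ‖π g (w n) - w n‖ ≤ 3 / (n + 1) := by
    intro n g hg
    have hiso : ‖π g (w n) - π g (u n)‖ = ‖w n - u n‖ := by
      rw [← map_sub]; exact hπiso g _
    calc ‖π g (w n) - w n‖
        = ‖(π g (w n) - π g (u n)) + (π g (u n) - u n) + (u n - w n)‖ := by congr 1; abel
      _ ≤ ‖(π g (w n) - π g (u n)) + (π g (u n) - u n)‖ + ‖u n - w n‖ := norm_add_le _ _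
      _ ≤ ‖π g (w n) - π g (u n)‖ + ‖π g (u n) - u n‖ + ‖u n - w n‖ := by
          have := norm_add_le (π g (w n) - π g (u n)) (π g (u n) - u n)
          linarith
      _ ≤ 1 / (n + 1) + 1 / (n + 1) + 1 / (n + 1) := by
          have h1 := hwu n
          have h2 := (huQK n g (Or.inl hg)).le
          have h3 : ‖u n - w n‖ = ‖w n - u n‖ := norm_sub_rev _ _
          rw [hiso, h3]
          linarith
      _ = 3 / (n + 1) := by ring
  -- Pass to the finite-dimensional fixed subspace and extract a convergent subsequence.
  set F := fixedSubmodule π K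
  haveI : ProperSpace F := FiniteDimensional.proper ℝ F
  set x : ℕ → F := fun n => ⟨w n, hwK n⟩ with hxdef
  have hxball : ∀ n, x n ∈ Metric.closedBall (0 : F) 2 := by
    intro n
    rw [Metric.mem_closedBall, dist_zero_right]
    have : ‖x n‖ = ‖w n‖ := rfl
    rw [this]
    have h1 : 1 / ((n : ℝ) + 1) ≤ 1 := by
      rw [div_le_one (by positivity)]; linarith [Nat.cast_nonneg (α := ℝ) n]
    linarith [hwnorm_le n]
  obtain ⟨x₀, _, φ, hφmono, hφtend⟩ :=
    (isCompact_closedBall (0 : F) 2).tendsto_subseq hxball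
  set v := (x₀ : B) with hvdef
  have hφge : ∀ n, n ≤ φ n := fun n => hφmono.le_apply
  have hvtend : Filter.Tendsto (fun n => w (φ n)) Filter.atTop (nhds v) :=
    (continuous_subtype_val.tendsto x₀).comp hφtend
  -- The auxiliary sequence `1/(n+1)` tends to `0`.
  have htend0 : Filter.Tendsto (fun n : ℕ => 1 / ((n : ℝ) + 1)) Filter.atTop (nhds 0) :=
    tendsto_one_div_add_atTop_nhds_zero_nat
  have htendφ : Filter.Tendsto (fun n : ℕ => 1 / ((φ n : ℝ) + 1)) Filter.atTop (nhds 0) := by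
    refine squeeze_zero (fun n => by positivity) (fun n => ?_) htend0
    apply div_le_div_of_nonneg_left one_pos.le (by positivity)
    have h := (Nat.cast_le (α := ℝ)).mpr (hφge n)
    linarith
  -- `v` is nonzero.
  have hvnorm : (1 : ℝ) ≤ ‖v‖ := by
    have hnt : Filter.Tendsto (fun n => ‖w (φ n)‖) Filter.atTop (nhds ‖v‖) :=
      (continuous_norm.tendsto v).comp hvtend
    have hlt : Filter.Tendsto (fun n : ℕ => 1 - 1 / ((φ n : ℝ) + 1)) Filter.atTop (nhds 1) := by
      simpa using (tendsto_const_nhds (x := (1 : ℝ))).sub htendφ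
    exact le_of_tendsto_of_tendsto' hlt hnt (fun n => hwnorm_ge (φ n))
  have hv0 : v ≠ 0 := by
    intro h
    rw [h, norm_zero] at hvnorm
    linarith
  -- `v` is fixed by every element of `Q`.
  have hvQ : ∀ g ∈ Q, π g v = v := by
    intro g hg
    have hnt : Filter.Tendsto (fun n => ‖π g (w (φ n)) - w (φ n)‖) Filter.atTop
        (nhds ‖π g v - v‖) := by
      have hc : Continuous fun b : B => ‖π g b - b‖ :=
        ((π g).continuous.sub continuous_id).norm
      exact (hc.tendsto v).comp hvtend
    have hlt : Filter.Tendsto (fun n : ℕ => 3 / ((φ n : ℝ) + 1)) Filter.atTop (nhds 0) := by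
      have : (fun n : ℕ => 3 / ((φ n : ℝ) + 1)) = fun n => 3 * (1 / ((φ n : ℝ) + 1)) := by
        funext n; ring
      rw [this]
      simpa using htendφ.const_mul 3
    have hle : ‖π g v - v‖ ≤ 0 :=
      le_of_tendsto_of_tendsto' hnt hlt (fun n => hwQ (φ n) g hg)
    have : ‖π g v - v‖ = 0 := le_antisymm hle (norm_nonneg _)
    rw [norm_eq_zero, sub_eq_zero] at this
    exact this
  -- `v` is then fixed by every element of `G` since `Q` generates `G`.
  refine ⟨v, hv0, ?_⟩
  have hpow : ∀ n : ℕ, ∀ g ∈ Q ^ n, π g v = v := by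
    intro n
    induction n with
    | zero =>
      intro g hg
      rw [pow_zero, Set.mem_one] at hg
      rw [hg, map_one]
      rfl
    | succ m ih =>
      intro g hg
      rw [pow_succ] at hg
      obtain ⟨a, ha, b, hb, rfl⟩ := hg
      rw [map_mul]
      have : (π a * π b) v = π a (π b v) := rfl
      rw [this, hvQ b hb, ih a ha]
  intro g
  obtain ⟨n, hn⟩ := hQgen g
  exact hpow n g hn
end

section
/- Let m₁, m₂ ≥ 0 be real numbers with m₁ + 2m₂ > 0, and define f : (0, ∞) → (0, ∞) by f(r) = (sinh r)^{m₁} (sinh 2r)^{m₂}. Let η : (0, ∞) → [0, ∞) be continuous and bounded. Then limsup_{r→∞} (1/f(r)) ∫₀^r η(s) f(s) ds ≤ (limsup_{s→∞} η(s)) / (m₁ + 2m₂), and liminf_{r→∞} (1/f(r)) ∫₀^r η(s) f(s) ds ≥ (liminf_{s→∞} η(s)) / (m₁ + 2m₂). -/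
open Filter MeasureTheory
open Real Set

noncomputable def sinhW (m₁ m₂ r : ℝ) : ℝ := Real.sinh r ^ m₁ * Real.sinh (2*r) ^ m₂
noncomputable def cothSum (m₁ m₂ r : ℝ) : ℝ :=
  m₁ * (Real.cosh r / Real.sinh r) + 2*m₂ * (Real.cosh (2*r) / Real.sinh (2*r))
noncomputable def sinhW' (m₁ m₂ r : ℝ) : ℝ := sinhW m₁ m₂ r * cothSum m₁ m₂ r

lemma sinhW_pos {m₁ m₂ r : ℝ} (hr : 0 < r) : 0 < sinhW m₁ m₂ r :=
  mul_pos (rpow_pos_of_pos (Real.sinh_pos_iff.mpr hr) _)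
    (rpow_pos_of_pos (Real.sinh_pos_iff.mpr (by linarith)) _)

lemma sinhW_continuousOn (m₁ m₂ : ℝ) : ContinuousOn (sinhW m₁ m₂) (Ioi 0) := by
  apply ContinuousOn.mul
  · exact Real.continuous_sinh.continuousOn.rpow_const
      (fun x hx => Or.inl (Real.sinh_pos_iff.mpr hx).ne')
  · exact (Real.continuous_sinh.comp (continuous_const.mul continuous_id)).continuousOn.rpow_const
      (fun x hx => Or.inl (Real.sinh_pos_iff.mpr (by simpa using mul_pos two_pos (mem_Ioi.mp hx))).ne')

lemma cothSum_continuousOn (m₁ m₂ : ℝ) : ContinuousOn (cothSum m₁ m₂) (Ioi 0) := by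
  apply ContinuousOn.add
  · exact continuousOn_const.mul (Real.continuous_cosh.continuousOn.div
      Real.continuous_sinh.continuousOn (fun x hx => (Real.sinh_pos_iff.mpr hx).ne'))
  · refine continuousOn_const.mul (ContinuousOn.div ?_ ?_ ?_)
    · exact (Real.continuous_cosh.comp (continuous_const.mul continuous_id)).continuousOn
    · exact (Real.continuous_sinh.comp (continuous_const.mul continuous_id)).continuousOn
    · intro x hx
      exact (Real.sinh_pos_iff.mpr (by simpa using mul_pos two_pos (mem_Ioi.mp hx))).ne'

lemma sinhW'_continuousOn (m₁ m₂ : ℝ) : ContinuousOn (sinhW' m₁ m₂) (Ioi 0) :=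
  (sinhW_continuousOn m₁ m₂).mul (cothSum_continuousOn m₁ m₂)

lemma sinhW_hasDerivAt (m₁ m₂ : ℝ) {r : ℝ} (hr : 0 < r) :
    HasDerivAt (sinhW m₁ m₂) (sinhW' m₁ m₂ r) r := by
  have hs : 0 < Real.sinh r := Real.sinh_pos_iff.mpr hr
  have hs2 : 0 < Real.sinh (2*r) := Real.sinh_pos_iff.mpr (by linarith)
  have h1 : HasDerivAt (fun x => Real.sinh x ^ m₁)
      ((m₁ * Real.sinh r ^ (m₁ - 1)) * Real.cosh r) r :=
    (Real.hasDerivAt_rpow_const (Or.inl hs.ne')).comp r (Real.hasDerivAt_sinh r)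
  have hinner : HasDerivAt (fun x : ℝ => Real.sinh (2*x)) (Real.cosh (2*r) * 2) r :=
    (Real.hasDerivAt_sinh (2*r)).comp r (by simpa using (hasDerivAt_id r).const_mul (2:ℝ))
  have h2 : HasDerivAt (fun x => Real.sinh (2*x) ^ m₂)
      ((m₂ * Real.sinh (2*r) ^ (m₂ - 1)) * (Real.cosh (2*r) * 2)) r :=
    by have := (Real.hasDerivAt_rpow_const (x := Real.sinh (2*r)) (p := m₂) (Or.inl hs2.ne')).comp r hinner; exact this
  have := h1.mul h2
  refine this.congr_deriv ?_
  unfold sinhW' cothSum sinhW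
  rw [Real.rpow_sub_one hs.ne', Real.rpow_sub_one hs2.ne']
  field_simp

lemma cothSum_ge {m₁ m₂ : ℝ} (hm₁ : 0 ≤ m₁) (hm₂ : 0 ≤ m₂) {r : ℝ} (hr : 0 < r) :
    m₁ + 2*m₂ ≤ cothSum m₁ m₂ r := by
  have h1 : (1:ℝ) ≤ Real.cosh r / Real.sinh r := by
    rw [le_div_iff₀ (Real.sinh_pos_iff.mpr hr)]
    nlinarith [Real.cosh_sub_sinh r, Real.exp_pos (-r)]
  have h2 : (1:ℝ) ≤ Real.cosh (2*r) / Real.sinh (2*r) := by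
    rw [le_div_iff₀ (Real.sinh_pos_iff.mpr (by linarith))]
    nlinarith [Real.cosh_sub_sinh (2*r), Real.exp_pos (-(2*r))]
  unfold cothSum
  nlinarith

lemma coth_tendsto : Tendsto (fun r => Real.cosh r / Real.sinh r) atTop (nhds 1) := by
  have key : ∀ᶠ r in atTop, Real.cosh r / Real.sinh r = 1 + Real.exp (-r) / Real.sinh r := by
    filter_upwards [eventually_gt_atTop (0:ℝ)] with r hr
    have hs : 0 < Real.sinh r := Real.sinh_pos_iff.mpr hr
    have := Real.cosh_sub_sinh r
    field_simp
    linarith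
  rw [tendsto_congr' key]
  have h0 : Tendsto (fun r => Real.exp (-r) / Real.sinh r) atTop (nhds 0) := by
    apply squeeze_zero' (g := fun r => Real.exp (-r) / Real.sinh 1)
    · filter_upwards [eventually_gt_atTop (0:ℝ)] with r hr
      positivity
    · filter_upwards [eventually_ge_atTop (1:ℝ)] with r hr
      apply div_le_div_of_nonneg_left (Real.exp_pos _).le (Real.sinh_pos_iff.mpr one_pos)
      exact Real.sinh_le_sinh.mpr hr
    · simpa using Real.tendsto_exp_neg_atTop_nhds_zero.div_const (Real.sinh 1)
  simpa using tendsto_const_nhds.add h0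

lemma cothSum_tendsto (m₁ m₂ : ℝ) :
    Tendsto (cothSum m₁ m₂) atTop (nhds (m₁ + 2*m₂)) := by
  have h2 : Tendsto (fun r : ℝ => 2*r) atTop atTop :=
    (tendsto_id (α := ℝ)).const_mul_atTop two_pos
  have := (tendsto_const_nhds (x := m₁)).mul coth_tendsto |>.add
    ((tendsto_const_nhds (x := 2*m₂)).mul (coth_tendsto.comp h2))
  unfold cothSum; simpa [Function.comp] using this

lemma sinhW_tendsto_atTop {m₁ m₂ : ℝ} (hm₁ : 0 ≤ m₁) (hm₂ : 0 ≤ m₂)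
    (hm : 0 < m₁ + 2*m₂) : Tendsto (sinhW m₁ m₂) atTop atTop := by
  have hsinh : Tendsto Real.sinh atTop atTop := by
    apply tendsto_atTop_mono' atTop ?_ tendsto_id
    filter_upwards [eventually_gt_atTop (0:ℝ)] with r hr
    exact (Real.self_lt_sinh_iff.mpr hr).le
  have hbase : Tendsto (fun r => Real.sinh r ^ (m₁ + 2*m₂)) atTop atTop :=
    (tendsto_rpow_atTop hm).comp hsinh
  apply tendsto_atTop_mono' atTop _ hbase
  filter_upwards [eventually_gt_atTop (0:ℝ)] with r hr
  have hs : 0 < Real.sinh r := Real.sinh_pos_iff.mpr hr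
  have hsq : Real.sinh r ^ (2:ℕ) ≤ Real.sinh (2*r) := by
    rw [Real.sinh_two_mul]
    nlinarith [Real.cosh_sub_sinh r, Real.exp_pos (-r)]
  have h1 : Real.sinh r ^ (2*m₂) ≤ Real.sinh (2*r) ^ m₂ := by
    calc Real.sinh r ^ (2*m₂) = (Real.sinh r ^ (2:ℕ)) ^ m₂ := by
          rw [← Real.rpow_natCast (Real.sinh r) 2, ← Real.rpow_mul hs.le]
          norm_num [mul_comm]
      _ ≤ Real.sinh (2*r) ^ m₂ := Real.rpow_le_rpow (by positivity) hsq hm₂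
  calc Real.sinh r ^ (m₁ + 2*m₂) = Real.sinh r ^ m₁ * Real.sinh r ^ (2*m₂) :=
        Real.rpow_add hs _ _
    _ ≤ sinhW m₁ m₂ r := by
        unfold sinhW
        exact mul_le_mul_of_nonneg_left h1 (by positivity)

lemma sinhW_mono {m₁ m₂ : ℝ} (hm₁ : 0 ≤ m₁) (hm₂ : 0 ≤ m₂) {s r : ℝ}
    (hs : 0 < s) (hsr : s ≤ r) : sinhW m₁ m₂ s ≤ sinhW m₁ m₂ r := by
  unfold sinhW
  apply mul_le_mul
  · exact Real.rpow_le_rpow (Real.sinh_pos_iff.mpr hs).le (Real.sinh_le_sinh.mpr hsr) hm₁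
  · exact Real.rpow_le_rpow (Real.sinh_pos_iff.mpr (by linarith)).le
      (Real.sinh_le_sinh.mpr (by linarith)) hm₂
  · exact Real.rpow_nonneg (Real.sinh_pos_iff.mpr (show (0:ℝ) < 2*s by linarith)).le _
  · exact Real.rpow_nonneg (Real.sinh_pos_iff.mpr (show (0:ℝ) < r by linarith)).le _

lemma sinhW_ftc (m₁ m₂ : ℝ) {a b : ℝ} (ha : 0 < a) (hab : a ≤ b) :
    ∫ s in a..b, sinhW' m₁ m₂ s = sinhW m₁ m₂ b - sinhW m₁ m₂ a := by
  have huIcc : Set.uIcc a b ⊆ Set.Ioi 0 := by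
    rw [Set.uIcc_of_le hab]
    exact fun x hx => lt_of_lt_of_le ha hx.1
  apply intervalIntegral.integral_eq_sub_of_hasDerivAt
  · exact fun x hx => sinhW_hasDerivAt m₁ m₂ (huIcc hx)
  · exact ((sinhW'_continuousOn m₁ m₂).mono huIcc).intervalIntegrable

lemma sinhW_intervalIntegrable (m₁ m₂ : ℝ) {a b : ℝ} (ha : 0 < a) (hab : a ≤ b) :
    IntervalIntegrable (sinhW m₁ m₂) volume a b := by
  apply ((sinhW_continuousOn m₁ m₂).mono ?_).intervalIntegrable
  rw [Set.uIcc_of_le hab]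
  exact fun x hx => lt_of_lt_of_le ha hx.1

lemma sinhW_integral_upper {m₁ m₂ : ℝ} (hm₁ : 0 ≤ m₁) (hm₂ : 0 ≤ m₂) {a b : ℝ}
    (ha : 0 < a) (hab : a ≤ b) :
    (m₁ + 2*m₂) * ∫ s in Set.Ioo a b, sinhW m₁ m₂ s ≤ sinhW m₁ m₂ b - sinhW m₁ m₂ a := by
  have h1 : ∫ s in a..b, (m₁ + 2*m₂) * sinhW m₁ m₂ s ≤ ∫ s in a..b, sinhW' m₁ m₂ s := by
    apply intervalIntegral.integral_mono_on hab
      ((sinhW_intervalIntegrable m₁ m₂ ha hab).const_mul _)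
      (by
        apply ((sinhW'_continuousOn m₁ m₂).mono ?_).intervalIntegrable
        rw [Set.uIcc_of_le hab]; exact fun x hx => lt_of_lt_of_le ha hx.1)
    intro x hx
    have hx0 : 0 < x := lt_of_lt_of_le ha hx.1
    have := cothSum_ge hm₁ hm₂ hx0
    have hF := sinhW_pos (m₁ := m₁) (m₂ := m₂) hx0
    unfold sinhW'
    nlinarith
  rw [sinhW_ftc m₁ m₂ ha hab] at h1
  calc (m₁ + 2*m₂) * ∫ s in Set.Ioo a b, sinhW m₁ m₂ s
      = ∫ s in a..b, (m₁ + 2*m₂) * sinhW m₁ m₂ s := by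
        rw [intervalIntegral.integral_const_mul, intervalIntegral.integral_of_le hab,
          MeasureTheory.integral_Ioc_eq_integral_Ioo]
    _ ≤ _ := h1

lemma sinhW_integral_lower {m₁ m₂ c : ℝ} {a b : ℝ}
    (ha : 0 < a) (hab : a ≤ b) (hm₁ : 0 ≤ m₁) (hm₂ : 0 ≤ m₂)
    (hc : ∀ s, a ≤ s → cothSum m₁ m₂ s ≤ c) :
    sinhW m₁ m₂ b - sinhW m₁ m₂ a ≤ c * ∫ s in Set.Ioo a b, sinhW m₁ m₂ s := by
  have h1 : ∫ s in a..b, sinhW' m₁ m₂ s ≤ ∫ s in a..b, c * sinhW m₁ m₂ s := by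
    apply intervalIntegral.integral_mono_on hab
      (by
        apply ((sinhW'_continuousOn m₁ m₂).mono ?_).intervalIntegrable
        rw [Set.uIcc_of_le hab]; exact fun x hx => lt_of_lt_of_le ha hx.1)
      ((sinhW_intervalIntegrable m₁ m₂ ha hab).const_mul _)
    intro x hx
    have hx0 : 0 < x := lt_of_lt_of_le ha hx.1
    have hF := sinhW_pos (m₁ := m₁) (m₂ := m₂) hx0
    have := hc x hx.1
    unfold sinhW'
    nlinarith
  rw [sinhW_ftc m₁ m₂ ha hab] at h1
  calc sinhW m₁ m₂ b - sinhW m₁ m₂ a ≤ ∫ s in a..b, c * sinhW m₁ m₂ s := h1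
    _ = c * ∫ s in Set.Ioo a b, sinhW m₁ m₂ s := by
        rw [intervalIntegral.integral_const_mul, intervalIntegral.integral_of_le hab,
          MeasureTheory.integral_Ioc_eq_integral_Ioo]

/-- Let `m₁, m₂ ≥ 0` with `m₁ + 2m₂ > 0` and
`f(r) = (sinh r)^{m₁} (sinh 2r)^{m₂}`. Let `η : (0,∞) → [0,∞)` be continuous and bounded.
Then `limsup_{r→∞} (1/f r) ∫₀^r η f ≤ (limsup η) / (m₁ + 2m₂)` and
`liminf_{r→∞} (1/f r) ∫₀^r η f ≥ (liminf η) / (m₁ + 2m₂)`. -/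
theorem limsup_liminf_average_against_sinh_weight
    (m₁ m₂ : ℝ) (hm₁ : 0 ≤ m₁) (hm₂ : 0 ≤ m₂) (hm : 0 < m₁ + 2 * m₂)
    (f : ℝ → ℝ) (hf : ∀ r : ℝ, f r = Real.sinh r ^ m₁ * Real.sinh (2 * r) ^ m₂)
    (η : ℝ → ℝ) (hηcont : ContinuousOn η (Set.Ioi (0 : ℝ)))
    (hηnn : ∀ s : ℝ, 0 < s → 0 ≤ η s)
    (hηbdd : ∃ C : ℝ, ∀ s : ℝ, 0 < s → η s ≤ C) :
    limsup (fun r : ℝ => (1 / f r) * ∫ s in Set.Ioo (0 : ℝ) r, η s * f s) atTop ≤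
        limsup η atTop / (m₁ + 2 * m₂) ∧
      liminf η atTop / (m₁ + 2 * m₂) ≤
        liminf (fun r : ℝ => (1 / f r) * ∫ s in Set.Ioo (0 : ℝ) r, η s * f s) atTop := by
  have hfe : f = sinhW m₁ m₂ := funext fun r => by rw [hf r]; rfl
  subst hfe
  obtain ⟨C, hC⟩ := hηbdd
  set F := sinhW m₁ m₂ with hF
  set M := m₁ + 2 * m₂ with hM
  set C' := max C 0 with hC'
  have hηC' : ∀ s : ℝ, 0 < s → η s ≤ C' := fun s hs => (hC s hs).trans (le_max_left _ _)
  have hFpos : ∀ r : ℝ, 0 < r → 0 < F r := fun r hr => sinhW_pos hr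
  have hFtop : Tendsto F atTop atTop := sinhW_tendsto_atTop hm₁ hm₂ hm
  set A := fun r : ℝ => (1 / F r) * ∫ s in Set.Ioo (0 : ℝ) r, η s * F s with hA
  -- integrability of η * F on Ioo a b for 0 ≤ a
  have hInt : ∀ a b : ℝ, 0 ≤ a → IntegrableOn (fun s => η s * F s) (Set.Ioo a b) volume := by
    intro a b ha
    rcases le_or_gt b a with h | h
    · simp [Set.Ioo_eq_empty_of_le h]
    have hsub : Set.Ioo a b ⊆ Set.Ioi 0 := fun x hx => lt_of_le_of_lt ha hx.1
    have hmeas : AEStronglyMeasurable (fun s => η s * F s) (volume.restrict (Set.Ioo a b)) :=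
      ((hηcont.mono hsub).mul ((sinhW_continuousOn m₁ m₂).mono hsub)).aestronglyMeasurable
        measurableSet_Ioo
    apply Integrable.mono' (integrable_const (C' * F b)) hmeas
    rw [ae_restrict_iff' measurableSet_Ioo]
    filter_upwards with x hx
    have hx0 : 0 < x := lt_of_le_of_lt ha hx.1
    have hFx : 0 < F x := hFpos x hx0
    rw [Real.norm_eq_abs, abs_of_nonneg (mul_nonneg (hηnn x hx0) hFx.le)]
    have hFb : F x ≤ F b := sinhW_mono hm₁ hm₂ hx0 hx.2.le
    exact mul_le_mul (hηC' x hx0) hFb hFx.le ((hηnn x hx0).trans (hηC' x hx0))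
  have hIntF : ∀ a b : ℝ, 0 ≤ a → IntegrableOn F (Set.Ioo a b) volume := by
    intro a b ha
    rcases le_or_gt b a with h | h
    · simp [Set.Ioo_eq_empty_of_le h]
    have hsub : Set.Ioo a b ⊆ Set.Ioi 0 := fun x hx => lt_of_le_of_lt ha hx.1
    have hmeas : AEStronglyMeasurable F (volume.restrict (Set.Ioo a b)) :=
      ((sinhW_continuousOn m₁ m₂).mono hsub).aestronglyMeasurable measurableSet_Ioo
    apply Integrable.mono' (integrable_const (F b)) hmeas
    rw [ae_restrict_iff' measurableSet_Ioo]
    filter_upwards with x hx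
    have hx0 : 0 < x := lt_of_le_of_lt ha hx.1
    rw [Real.norm_eq_abs, abs_of_nonneg (hFpos x hx0).le]
    exact sinhW_mono hm₁ hm₂ hx0 hx.2.le
  -- splitting the integral
  have hsplit : ∀ R r : ℝ, 0 < R → R ≤ r →
      ∫ s in Set.Ioo (0:ℝ) r, η s * F s =
        (∫ s in Set.Ioo (0:ℝ) R, η s * F s) + ∫ s in Set.Ioo R r, η s * F s := by
    intro R r hR hRr
    have hunion : Set.Ioo (0:ℝ) R ∪ Set.Ico R r = Set.Ioo (0:ℝ) r :=
      Set.Ioo_union_Ico_eq_Ioo hR hRr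
    have hIco : IntegrableOn (fun s => η s * F s) (Set.Ico R r) volume := by
      rcases eq_or_lt_of_le hRr with h | h
      · simp [h]
      have hsub : Set.Icc R r ⊆ Set.Ioi 0 := fun x hx => lt_of_lt_of_le hR hx.1
      exact (((hηcont.mono hsub).mul ((sinhW_continuousOn m₁ m₂).mono hsub)).integrableOn_Icc).mono_set
        Set.Ico_subset_Icc_self
    rw [← hunion, setIntegral_union (by
      apply Set.disjoint_left.mpr
      intro x hx hx2
      exact absurd hx2.1 (not_le.mpr hx.2)) measurableSet_Ico
      (hInt 0 R le_rfl) hIco, MeasureTheory.integral_Ico_eq_integral_Ioo]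
  -- nonnegativity of A
  have hAnn : ∀ r : ℝ, 0 < r → 0 ≤ A r := by
    intro r hr
    apply mul_nonneg (one_div_nonneg.mpr (hFpos r hr).le)
    apply setIntegral_nonneg measurableSet_Ioo
    intro x hx
    exact mul_nonneg (hηnn x hx.1) (hFpos x hx.1).le
  -- boundedness facts for η
  have hbddAbove_η : IsBoundedUnder (· ≤ ·) atTop η := by
    refine ⟨C', ?_⟩
    rw [eventually_map]
    filter_upwards [eventually_gt_atTop (0:ℝ)] with s hs using hηC' s hs
  have hbddBelow_η : IsBoundedUnder (· ≥ ·) atTop η := by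
    refine ⟨0, ?_⟩
    rw [eventually_map]
    filter_upwards [eventually_gt_atTop (0:ℝ)] with s hs using hηnn s hs
  set L := limsup η atTop with hL
  set l := liminf η atTop with hl
  have hL0 : 0 ≤ L := by
    apply le_limsup_of_frequently_le ?_ hbddAbove_η
    apply Eventually.frequently
    filter_upwards [eventually_gt_atTop (0:ℝ)] with s hs using hηnn s hs
  have hl0 : 0 ≤ l := by
    apply le_liminf_of_le hbddAbove_η.isCoboundedUnder_ge
    filter_upwards [eventually_gt_atTop (0:ℝ)] with s hs using hηnn s hs
  -- key eventual upper bound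
  have hev : ∀ ε : ℝ, 0 < ε → ∀ᶠ r in atTop, A r ≤ L / M + ε := by
    intro ε hε
    set ε' := ε * M / 2 with hε'def
    have hε'pos : 0 < ε' := by
      rw [hε'def]; positivity
    have h1 : ∀ᶠ s in atTop, η s < L + ε' :=
      eventually_lt_of_limsup_lt (lt_add_of_pos_right _ hε'pos) hbddAbove_η
    rw [eventually_atTop] at h1
    obtain ⟨R₀, hR₀⟩ := h1
    set R := max R₀ 1 with hRdef
    have hRpos : (0:ℝ) < R := lt_of_lt_of_le one_pos (le_max_right _ _)
    set K := ∫ s in Set.Ioo (0:ℝ) R, η s * F s with hK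
    have hKnn : 0 ≤ K := by
      apply setIntegral_nonneg measurableSet_Ioo
      intro x hx
      exact mul_nonneg (hηnn x hx.1) (hFpos x hx.1).le
    filter_upwards [hFtop.eventually_ge_atTop (K / (ε/2)), eventually_ge_atTop R]
      with r h2 h3
    have hr0 : 0 < r := lt_of_lt_of_le hRpos h3
    have hFr : 0 < F r := hFpos r hr0
    have hLε : 0 ≤ L + ε' := by linarith
    have hint_le : ∫ s in Set.Ioo R r, η s * F s ≤ (L + ε') * ∫ s in Set.Ioo R r, F s := by
      rw [← MeasureTheory.integral_const_mul]
      apply setIntegral_mono_on (hInt R r hRpos.le)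
        ((hIntF R r hRpos.le).const_mul _) measurableSet_Ioo
      intro x hx
      have hx0 : 0 < x := lt_trans hRpos hx.1
      have hηx : η x ≤ L + ε' := (hR₀ x (le_trans (le_max_left _ _) hx.1.le)).le
      exact mul_le_mul_of_nonneg_right hηx (hFpos x hx0).le
    have hIF : ∫ s in Set.Ioo R r, F s ≤ F r / M := by
      have h4 := sinhW_integral_upper hm₁ hm₂ hRpos h3
      have hFR : 0 < F R := hFpos R hRpos
      rw [le_div_iff₀ hm]
      change M * _ ≤ _ at h4
      linarith
    have e1 : K ≤ F r * (ε/2) := by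
      rw [div_le_iff₀ (half_pos hε)] at h2
      linarith
    have step : A r ≤ (1/F r) * (K + (L + ε') * (F r / M)) := by
      rw [hA]
      simp only
      rw [hsplit R r hRpos h3]
      apply mul_le_mul_of_nonneg_left _ (one_div_nonneg.mpr hFr.le)
      have := mul_le_mul_of_nonneg_left hIF hLε
      linarith [hint_le]
    refine le_trans step ?_
    rw [one_div, inv_mul_le_iff₀ hFr]
    have hexp : (L + ε') * (F r / M) = (L/M) * F r + (ε/2) * F r := by
      rw [hε'def]
      field_simp
    rw [hexp]
    nlinarith
  have hAbddAbove : IsBoundedUnder (· ≤ ·) atTop A :=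
    ⟨L/M + 1, eventually_map.mpr (hev 1 one_pos)⟩
  have hAbddBelow : IsBoundedUnder (· ≥ ·) atTop A := by
    refine ⟨0, ?_⟩
    rw [eventually_map]
    filter_upwards [eventually_gt_atTop (0:ℝ)] with r hr using hAnn r hr
  constructor
  · -- limsup part
    apply le_of_forall_pos_le_add
    intro ε hε
    exact limsup_le_of_le hAbddBelow.isCoboundedUnder_le (hev ε hε)
  · -- liminf part
    have hClaim : ∀ c : ℝ, 0 ≤ c → c * M < l → c ≤ liminf A atTop := by
      intro c hc0 hcl
      set ε := (l - c*M)/(2*(1+c)) with hεdef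
      have hεpos : 0 < ε := div_pos (by linarith) (by linarith)
      have hεeq : ε * (2*(1+c)) = l - c*M := by
        rw [hεdef]
        field_simp
      have hgap : c*(M+ε) < l - ε := by nlinarith
      have hlε : 0 < l - ε := by nlinarith
      have h1 : ∀ᶠ s in atTop, l - ε < η s :=
        eventually_lt_of_lt_liminf (by linarith) hbddBelow_η
      have h2 : ∀ᶠ s in atTop, cothSum m₁ m₂ s ≤ M + ε :=
        (cothSum_tendsto m₁ m₂).eventually_le_const (lt_add_of_pos_right _ hεpos)
      rw [eventually_atTop] at h1 h2
      obtain ⟨R₁, hR₁⟩ := h1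
      obtain ⟨R₂, hR₂⟩ := h2
      set R := max 1 (max R₁ R₂) with hRdef
      have hRpos : (0:ℝ) < R := lt_of_lt_of_le one_pos (le_max_left _ _)
      have hFR : 0 < F R := hFpos R hRpos
      set gap := (l - ε) - c*(M+ε) with hgapdef
      have hgappos : 0 < gap := by rw [hgapdef]; linarith
      apply le_liminf_of_le hAbddAbove.isCoboundedUnder_ge
      filter_upwards [eventually_ge_atTop R,
        hFtop.eventually_ge_atTop ((l-ε) * F R / gap + 1)] with r hrR hrT
      have hr0 : 0 < r := lt_of_lt_of_le hRpos hrR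
      have hFr : 0 < F r := hFpos r hr0
      have hMε : 0 < M + ε := by linarith
      have hFTC : F r - F R ≤ (M+ε) * ∫ s in Set.Ioo R r, F s := by
        apply sinhW_integral_lower hRpos hrR hm₁ hm₂
        intro s hs
        exact hR₂ s (le_trans (le_trans (le_max_right _ _) (le_max_right _ _)) hs)
      have hmono1 : (l-ε) * ∫ s in Set.Ioo R r, F s ≤ ∫ s in Set.Ioo R r, η s * F s := by
        rw [← MeasureTheory.integral_const_mul]
        apply setIntegral_mono_on ((hIntF R r hRpos.le).const_mul _)
          (hInt R r hRpos.le) measurableSet_Ioo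
        intro x hx
        have hx0 : 0 < x := lt_trans hRpos hx.1
        have hηx : l - ε ≤ η x :=
          (hR₁ x (le_trans (le_trans (le_max_left _ _) (le_max_right _ _)) hx.1.le)).le
        exact mul_le_mul_of_nonneg_right hηx (hFpos x hx0).le
      have hmono2 : ∫ s in Set.Ioo R r, η s * F s ≤ ∫ s in Set.Ioo (0:ℝ) r, η s * F s := by
        apply setIntegral_mono_set (hInt 0 r le_rfl)
        · filter_upwards [ae_restrict_mem measurableSet_Ioo] with x hx
          exact mul_nonneg (hηnn x hx.1) (hFpos x hx.1).le
        · exact HasSubset.Subset.eventuallyLE (Set.Ioo_subset_Ioo hRpos.le le_rfl)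
      have key : c * F r * (M+ε) ≤ (l-ε) * (F r - F R) := by
        have hT2 : (l-ε) * F R / gap < F r := lt_of_lt_of_le (lt_add_one _) hrT
        rw [div_lt_iff₀ hgappos] at hT2
        have hexp : c * F r * (M+ε) = (l-ε)*F r - gap * F r := by
          rw [hgapdef]; ring
        nlinarith
      have final : c * F r ≤ ∫ s in Set.Ioo (0:ℝ) r, η s * F s := by
        have h3 : c * F r * (M+ε) ≤ (l-ε) * ((M+ε) * ∫ s in Set.Ioo R r, F s) :=
          le_trans key (mul_le_mul_of_nonneg_left hFTC hlε.le)
        have h4 : (l-ε) * ((M+ε) * ∫ s in Set.Ioo R r, F s)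
            = (M+ε) * ((l-ε) * ∫ s in Set.Ioo R r, F s) := by ring
        have h5 := mul_le_mul_of_nonneg_left hmono1 hMε.le
        have h6 := mul_le_mul_of_nonneg_left hmono2 hMε.le
        have h7 : c * F r * (M+ε) ≤ (∫ s in Set.Ioo (0:ℝ) r, η s * F s) * (M+ε) := by
          rw [h4] at h3
          linarith
        exact le_of_mul_le_mul_right (by linarith [h7]) hMε
      calc c = (1/F r) * (c * F r) := by field_simp
        _ ≤ A r := by
            rw [hA]
            exact mul_le_mul_of_nonneg_left final (one_div_nonneg.mpr hFr.le)
    rcases eq_or_lt_of_le hl0 with h0 | hlpos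
    · rw [← h0, zero_div]
      apply le_liminf_of_le hAbddAbove.isCoboundedUnder_ge
      filter_upwards [eventually_gt_atTop (0:ℝ)] with r hr using hAnn r hr
    · apply le_of_forall_lt
      intro c hc
      rcases lt_or_ge c 0 with hc0 | hc0
      · refine lt_of_lt_of_le hc0 (hClaim 0 le_rfl ?_)
        simpa using hlpos
      · set c' := (c + l/M)/2 with hc'def
        have hcc' : c < c' := by
          rw [hc'def]; linarith
        have hc'0 : 0 ≤ c' := by
          rw [hc'def]
          have : 0 < l / M := div_pos hlpos hm
          linarith
        have hc'M : c' * M < l := by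
          have h8 : c' < l / M := by rw [hc'def]; linarith
          calc c' * M < (l/M) * M := by exact mul_lt_mul_of_pos_right h8 hm
            _ = l := by field_simp
        exact lt_of_lt_of_le hcc' (hClaim c' hc'0 hc'M)
end

section
/- Let m₁, m₂ ≥ 0 be real numbers with m₁ + 2m₂ > 0, and define f(r) = (sinh r)^{m₁} (sinh 2r)^{m₂} for r > 0. Let η : (0, ∞) → ℝ be continuous with 0 < c₁ ≤ η(s) ≤ c₂ for all s > 0, and define ψ(r) = (2/f(r)) ∫₀^r η(s) f(s) ds and φ(r) = ∫₀^r ψ(t) dt. Then liminf_{r→∞} φ(r)/r ≥ 2c₁/(m₁ + 2m₂) and limsup_{r→∞} φ(r)/r ≤ 2c₂/(m₁ + 2m₂); in particular φ(r) ≍ r as r → ∞, i.e. there exist constants 0 < a ≤ b and R > 0 such that a·r ≤ φ(r) ≤ b·r for all r ≥ R. (Note that ψ is the particular solution, obtained by variation of constants, of the equation ψ'(r) + (m₁ coth r + 2 m₂ coth 2r) ψ(r) = 2η(r).) -/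
open Filter MeasureTheory

section Aux

/-- base function pieces -/
noncomputable def auxU (m₁ m₂ r : ℝ) : ℝ :=
  ((1 - Real.exp (-(2*r)))/2) ^ m₁ * ((1 - Real.exp (-(4*r)))/2) ^ m₂

lemma aux_sinh_eq (r : ℝ) : Real.sinh r = Real.exp r * ((1 - Real.exp (-(2*r)))/2) := by
  rw [Real.sinh_eq]
  have h : Real.exp r * Real.exp (-(2*r)) = Real.exp (-r) := by
    rw [← Real.exp_add]; ring_nf
  field_simp
  ring_nf; ring_nf at h; linarith

lemma aux_base_nonneg {r : ℝ} (hr : 0 ≤ r) (c : ℝ) (hc : 0 ≤ c) :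
    0 ≤ (1 - Real.exp (-(c*r)))/2 := by
  have : Real.exp (-(c*r)) ≤ 1 := Real.exp_le_one_iff.mpr (by nlinarith)
  linarith

lemma aux_base_pos {r : ℝ} (hr : 0 < r) (c : ℝ) (hc : 0 < c) :
    0 < (1 - Real.exp (-(c*r)))/2 := by
  have : Real.exp (-(c*r)) < 1 := Real.exp_lt_one_iff.mpr (by nlinarith)
  linarith

lemma aux_f_eq (m₁ m₂ : ℝ) (hm₁ : 0 ≤ m₁) (hm₂ : 0 ≤ m₂) {r : ℝ} (hr : 0 ≤ r) :
    Real.sinh r ^ m₁ * Real.sinh (2*r) ^ m₂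
      = Real.exp ((m₁ + 2*m₂)*r) * auxU m₁ m₂ r := by
  have h1 : Real.sinh r = Real.exp r * ((1 - Real.exp (-(2*r)))/2) := aux_sinh_eq r
  have h2 : Real.sinh (2*r) = Real.exp (2*r) * ((1 - Real.exp (-(4*r)))/2) := by
    have := aux_sinh_eq (2*r)
    rw [this]; ring_nf
  rw [h1, h2, Real.mul_rpow (Real.exp_pos r).le (aux_base_nonneg hr 2 (by norm_num)),
    Real.mul_rpow (Real.exp_pos (2*r)).le (aux_base_nonneg hr 4 (by norm_num)),
    ← Real.exp_mul, ← Real.exp_mul, auxU]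
  rw [show Real.exp (r*m₁) * ((1 - Real.exp (-(2*r)))/2) ^ m₁ *
      (Real.exp (2*r*m₂) * ((1 - Real.exp (-(4*r)))/2) ^ m₂)
      = (Real.exp (r*m₁) * Real.exp (2*r*m₂)) *
        (((1 - Real.exp (-(2*r)))/2) ^ m₁ * ((1 - Real.exp (-(4*r)))/2) ^ m₂) from by ring,
    ← Real.exp_add]
  ring_nf

lemma auxU_nonneg (m₁ m₂ : ℝ) {r : ℝ} (hr : 0 ≤ r) : 0 ≤ auxU m₁ m₂ r :=
  mul_nonneg (Real.rpow_nonneg (aux_base_nonneg hr 2 (by norm_num)) _)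
    (Real.rpow_nonneg (aux_base_nonneg hr 4 (by norm_num)) _)

lemma auxU_pos (m₁ m₂ : ℝ) {r : ℝ} (hr : 0 < r) : 0 < auxU m₁ m₂ r :=
  mul_pos (Real.rpow_pos_of_pos (aux_base_pos hr 2 (by norm_num)) _)
    (Real.rpow_pos_of_pos (aux_base_pos hr 4 (by norm_num)) _)

lemma auxU_mono (m₁ m₂ : ℝ) (hm₁ : 0 ≤ m₁) (hm₂ : 0 ≤ m₂) {s r : ℝ}
    (hs : 0 ≤ s) (hsr : s ≤ r) : auxU m₁ m₂ s ≤ auxU m₁ m₂ r := by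
  have h2 : (1 - Real.exp (-(2*s)))/2 ≤ (1 - Real.exp (-(2*r)))/2 := by
    have := Real.exp_le_exp.mpr (show -(2*r) ≤ -(2*s) by linarith)
    linarith
  have h4 : (1 - Real.exp (-(4*s)))/2 ≤ (1 - Real.exp (-(4*r)))/2 := by
    have := Real.exp_le_exp.mpr (show -(4*r) ≤ -(4*s) by linarith)
    linarith
  exact mul_le_mul (Real.rpow_le_rpow (aux_base_nonneg hs 2 (by norm_num)) h2 hm₁)
    (Real.rpow_le_rpow (aux_base_nonneg hs 4 (by norm_num)) h4 hm₂)
    (Real.rpow_nonneg (aux_base_nonneg hs 4 (by norm_num)) _)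
    (Real.rpow_nonneg (aux_base_nonneg (hs.trans hsr) 2 (by norm_num)) _)

noncomputable def auxC (m₁ m₂ : ℝ) : ℝ := ((1:ℝ)/2) ^ m₁ * ((1:ℝ)/2) ^ m₂

lemma auxC_pos (m₁ m₂ : ℝ) : 0 < auxC m₁ m₂ :=
  mul_pos (Real.rpow_pos_of_pos (by norm_num) _) (Real.rpow_pos_of_pos (by norm_num) _)

lemma auxU_le_C (m₁ m₂ : ℝ) (hm₁ : 0 ≤ m₁) (hm₂ : 0 ≤ m₂) {r : ℝ} (hr : 0 ≤ r) :
    auxU m₁ m₂ r ≤ auxC m₁ m₂ := by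
  have h2 : (1 - Real.exp (-(2*r)))/2 ≤ 1/2 := by
    have := (Real.exp_pos (-(2*r))).le; linarith
  have h4 : (1 - Real.exp (-(4*r)))/2 ≤ 1/2 := by
    have := (Real.exp_pos (-(4*r))).le; linarith
  exact mul_le_mul (Real.rpow_le_rpow (aux_base_nonneg hr 2 (by norm_num)) h2 hm₁)
    (Real.rpow_le_rpow (aux_base_nonneg hr 4 (by norm_num)) h4 hm₂)
    (Real.rpow_nonneg (aux_base_nonneg hr 4 (by norm_num)) _)
    (Real.rpow_nonneg (by norm_num) _)

lemma auxU_tendsto (m₁ m₂ : ℝ) :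
    Tendsto (auxU m₁ m₂) atTop (nhds (auxC m₁ m₂)) := by
  have hb : ∀ c : ℝ, 0 < c → Tendsto (fun r : ℝ => (1 - Real.exp (-(c*r)))/2) atTop
      (nhds (1/2)) := by
    intro c hc
    have h1 : Tendsto (fun r : ℝ => -(c*r)) atTop atBot := by
      have := (tendsto_id.const_mul_atTop hc : Tendsto (fun r : ℝ => c * r) atTop atTop)
      exact tendsto_neg_atTop_atBot.comp this
    have h2 : Tendsto (fun r : ℝ => Real.exp (-(c*r))) atTop (nhds 0) :=
      Real.tendsto_exp_atBot.comp h1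
    have := ((tendsto_const_nhds (x := (1:ℝ))).sub h2).div_const 2
    simpa using this
  have hp : ∀ m : ℝ, ContinuousAt (fun x : ℝ => x ^ m) (1/2) := fun m =>
    Real.continuousAt_rpow_const _ _ (Or.inl (by norm_num))
  have t2 := ((hp m₁).tendsto.comp (hb 2 (by norm_num)))
  have t4 := ((hp m₂).tendsto.comp (hb 4 (by norm_num)))
  exact t2.mul t4

lemma aux_int_exp (K a b : ℝ) (hK : K ≠ 0) (hab : a ≤ b) :
    ∫ s in Set.Ioo a b, Real.exp (K*s) = (Real.exp (K*b) - Real.exp (K*a))/K := by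
  rw [← MeasureTheory.integral_Ioc_eq_integral_Ioo, ← intervalIntegral.integral_of_le hab,
    intervalIntegral.integral_comp_mul_left Real.exp hK, integral_exp]
  field_simp
  rw [smul_eq_mul]; field_simp

end Aux
set_option maxHeartbeats 1000000 in
/-- Let `m₁, m₂ ≥ 0` with `m₁ + 2m₂ > 0`, let
`f(r) = (sinh r)^{m₁} (sinh 2r)^{m₂}`, let `η : (0,∞) → ℝ` be continuous with
`0 < c₁ ≤ η ≤ c₂`, and set `ψ(r) = (2/f r) ∫₀^r η f` and `φ(r) = ∫₀^r ψ`. Then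
`liminf φ(r)/r ≥ 2c₁/(m₁+2m₂)` and `limsup φ(r)/r ≤ 2c₂/(m₁+2m₂)`; in particular
`φ(r) ≍ r` as `r → ∞`. -/
theorem growth_of_variation_of_constants_solution
    (m₁ m₂ : ℝ) (hm₁ : 0 ≤ m₁) (hm₂ : 0 ≤ m₂) (hm : 0 < m₁ + 2 * m₂)
    (c₁ c₂ : ℝ) (hc₁ : 0 < c₁)
    (η : ℝ → ℝ) (hηcont : ContinuousOn η (Set.Ioi (0 : ℝ)))
    (hηbounds : ∀ s : ℝ, 0 < s → c₁ ≤ η s ∧ η s ≤ c₂)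
    (f ψ φ : ℝ → ℝ)
    (hf : ∀ r : ℝ, f r = Real.sinh r ^ m₁ * Real.sinh (2 * r) ^ m₂)
    (hψ : ∀ r : ℝ, ψ r = (2 / f r) * ∫ s in Set.Ioo (0 : ℝ) r, η s * f s)
    (hφ : ∀ r : ℝ, φ r = ∫ t in Set.Ioo (0 : ℝ) r, ψ t) :
    2 * c₁ / (m₁ + 2 * m₂) ≤ liminf (fun r : ℝ => φ r / r) atTop ∧
      limsup (fun r : ℝ => φ r / r) atTop ≤ 2 * c₂ / (m₁ + 2 * m₂) ∧
      ∃ a b R : ℝ, 0 < a ∧ a ≤ b ∧ 0 < R ∧ ∀ r : ℝ, R ≤ r → a * r ≤ φ r ∧ φ r ≤ b * r := by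
  set K : ℝ := m₁ + 2 * m₂ with hKdef
  have hK : 0 < K := hm
  set u : ℝ → ℝ := auxU m₁ m₂ with hudef
  set C : ℝ := auxC m₁ m₂ with hCdef
  have hCpos : 0 < C := auxC_pos m₁ m₂
  have hc12 : c₁ ≤ c₂ := (hηbounds 1 one_pos).1.trans (hηbounds 1 one_pos).2
  have hc₂ : 0 < c₂ := lt_of_lt_of_le hc₁ hc12
  -- basic facts on f
  have hfu : ∀ r : ℝ, 0 ≤ r → f r = Real.exp (K * r) * u r := fun r hr => by
    rw [hf r]; exact aux_f_eq m₁ m₂ hm₁ hm₂ hr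
  have hfnn : ∀ r : ℝ, 0 ≤ r → 0 ≤ f r := fun r hr => by
    rw [hfu r hr]; exact mul_nonneg (Real.exp_pos _).le (auxU_nonneg _ _ hr)
  have hfpos : ∀ r : ℝ, 0 < r → 0 < f r := fun r hr => by
    rw [hfu r hr.le]; exact mul_pos (Real.exp_pos _) (auxU_pos _ _ hr)
  have hfcont : Continuous f := by
    have hfe : f = fun r => Real.sinh r ^ m₁ * Real.sinh (2 * r) ^ m₂ := funext hf
    rw [hfe]
    exact ((Real.continuous_rpow_const hm₁).comp Real.continuous_sinh).mul
      ((Real.continuous_rpow_const hm₂).comp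
        (Real.continuous_sinh.comp (continuous_const.mul continuous_id)))
  have hfmono : ∀ s r : ℝ, 0 ≤ s → s ≤ r → f s ≤ f r := fun s r hs hsr => by
    rw [hf s, hf r]
    exact mul_le_mul
      (Real.rpow_le_rpow (Real.sinh_nonneg_iff.mpr hs) (Real.sinh_le_sinh.mpr hsr) hm₁)
      (Real.rpow_le_rpow (Real.sinh_nonneg_iff.mpr (by linarith))
        (Real.sinh_le_sinh.mpr (by linarith)) hm₂)
      (Real.rpow_nonneg (Real.sinh_nonneg_iff.mpr (by linarith)) _)
      (Real.rpow_nonneg (Real.sinh_nonneg_iff.mpr (by linarith)) _)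
  have hηfnn : ∀ s : ℝ, 0 < s → 0 ≤ η s * f s := fun s hs =>
    mul_nonneg (le_trans hc₁.le (hηbounds s hs).1) (hfnn s hs.le)
  -- integrability of η f on Ioo 0 r
  have hηf_int : ∀ r : ℝ, IntegrableOn (fun s => η s * f s) (Set.Ioo (0:ℝ) r) := by
    intro r
    rcases le_or_gt r 0 with hr | hr
    · rw [Set.Ioo_eq_empty (not_lt.mpr hr)]
      exact integrableOn_empty
    · have hmeas : AEStronglyMeasurable (fun s => η s * f s)
          (volume.restrict (Set.Ioo (0:ℝ) r)) := by
        apply ContinuousOn.aestronglyMeasurable _ measurableSet_Ioo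
        exact (hηcont.mono (fun x hx => hx.1)).mul hfcont.continuousOn
      refine Integrable.mono' (g := fun _ => c₂ * f r)
        ((integrableOn_const (C := c₂ * f r) (by simp [Real.volume_Ioo]))) hmeas ?_
      rw [ae_restrict_iff' measurableSet_Ioo]
      filter_upwards with s hs
      rw [Real.norm_eq_abs, abs_of_nonneg (hηfnn s hs.1)]
      exact mul_le_mul (hηbounds s hs.1).2 (hfmono s r hs.1.le hs.2.le)
        (hfnn s hs.1.le) hc₂.le
  -- integrability of exp (K s) on any Ioo
  have hexp_int : ∀ a b : ℝ, IntegrableOn (fun s => Real.exp (K*s)) (Set.Ioo a b) :=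
    fun a b => ((Real.continuous_exp.comp
      (continuous_const.mul continuous_id)).integrableOn_Icc).mono_set Set.Ioo_subset_Icc_self
  -- vanishing of the integral for r ≤ 0
  have hFzero : ∀ r : ℝ, r ≤ 0 → (∫ s in Set.Ioo (0:ℝ) r, η s * f s) = 0 := fun r hr => by
    rw [Set.Ioo_eq_empty (not_lt.mpr hr)]; simp
  -- monotonicity of the inner integral
  have hFmono : Monotone (fun r : ℝ => ∫ s in Set.Ioo (0:ℝ) r, η s * f s) := by
    intro a b hab
    dsimp only
    rcases le_or_gt a 0 with ha | ha
    · rw [hFzero a ha]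
      exact setIntegral_nonneg measurableSet_Ioo fun s hs => hηfnn s hs.1
    · refine setIntegral_mono_set (hηf_int b) ?_ ?_
      · rw [Filter.EventuallyLE, ae_restrict_iff' measurableSet_Ioo]
        filter_upwards with s hs using hηfnn s hs.1
      · exact (Set.Ioo_subset_Ioo le_rfl hab).eventuallyLE
  have hψmeas : Measurable ψ := by
    have hψeq : ψ = fun r => (2 / f r) * ∫ s in Set.Ioo (0:ℝ) r, η s * f s := funext hψ
    rw [hψeq]
    exact (measurable_const.div hfcont.measurable).mul hFmono.measurable
  -- ψ is nonnegative
  have hψnn : ∀ r : ℝ, 0 ≤ ψ r := by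
    intro r
    rcases le_or_gt r 0 with hr | hr
    · rw [hψ r, hFzero r hr, mul_zero]
    · rw [hψ r]
      exact mul_nonneg (div_nonneg (by norm_num) (hfpos r hr).le)
        (setIntegral_nonneg measurableSet_Ioo fun s hs => hηfnn s hs.1)
  -- upper bound on ψ
  have hψle : ∀ r : ℝ, ψ r ≤ 2 * c₂ / K := by
    intro r
    rcases le_or_gt r 0 with hr | hr
    · rw [hψ r, hFzero r hr, mul_zero]; positivity
    · have hstep : (∫ s in Set.Ioo (0:ℝ) r, η s * f s)
          ≤ ∫ s in Set.Ioo (0:ℝ) r, c₂ * u r * Real.exp (K*s) := by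
        refine setIntegral_mono_on (hηf_int r)
          ((hexp_int 0 r).const_mul (c₂ * u r)) measurableSet_Ioo ?_
        intro s hs
        have h2 : f s = Real.exp (K*s) * u s := hfu s hs.1.le
        have h3 : u s ≤ u r := auxU_mono m₁ m₂ hm₁ hm₂ hs.1.le hs.2.le
        calc η s * f s ≤ c₂ * f s :=
              mul_le_mul_of_nonneg_right (hηbounds s hs.1).2 (hfnn s hs.1.le)
          _ = c₂ * (Real.exp (K*s) * u s) := by rw [h2]
          _ ≤ c₂ * (Real.exp (K*s) * u r) := by
              exact mul_le_mul_of_nonneg_left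
                (mul_le_mul_of_nonneg_left h3 (Real.exp_pos _).le) hc₂.le
          _ = c₂ * u r * Real.exp (K*s) := by ring
      have hval : (∫ s in Set.Ioo (0:ℝ) r, c₂ * u r * Real.exp (K*s))
          = c₂ * u r * ((Real.exp (K*r) - Real.exp (K*0))/K) := by
        rw [← aux_int_exp K 0 r hK.ne' hr.le, ← integral_const_mul]
      have hur : 0 ≤ u r := auxU_nonneg _ _ hr.le
      have hbound : (∫ s in Set.Ioo (0:ℝ) r, η s * f s) ≤ c₂ * f r / K := by
        refine hstep.trans (hval.le.trans ?_)
        rw [hfu r hr.le, mul_zero, Real.exp_zero]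
        rw [show c₂ * u r * ((Real.exp (K*r) - 1)/K) = c₂ * u r * (Real.exp (K*r) - 1) / K
          from by ring]
        have hone : 1 ≤ Real.exp (K*r) := Real.one_le_exp (by positivity)
        apply (div_le_div_iff_of_pos_right hK).mpr
        nlinarith [mul_nonneg hc₂.le hur]
      rw [hψ r]
      have hfr := hfpos r hr
      calc (2 / f r) * ∫ s in Set.Ioo (0:ℝ) r, η s * f s
          ≤ (2 / f r) * (c₂ * f r / K) := mul_le_mul_of_nonneg_left hbound (by positivity)
        _ = 2 * c₂ / K := by field_simp
  -- ψ integrable on Ioo 0 r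
  have hψint : ∀ r : ℝ, IntegrableOn ψ (Set.Ioo (0:ℝ) r) := by
    intro r
    refine Integrable.mono' (g := fun _ => 2 * c₂ / K)
      ((integrableOn_const (C := 2 * c₂ / K) (by simp [Real.volume_Ioo])))
      (hψmeas.aestronglyMeasurable.restrict) ?_
    filter_upwards with s
    rw [Real.norm_eq_abs, abs_of_nonneg (hψnn s)]
    exact hψle s
  -- upper bound for φ
  have hφle : ∀ r : ℝ, 0 ≤ r → φ r ≤ (2 * c₂ / K) * r := by
    intro r hr
    rw [hφ r]
    calc (∫ t in Set.Ioo (0:ℝ) r, ψ t) ≤ ∫ _ in Set.Ioo (0:ℝ) r, 2 * c₂ / K :=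
        setIntegral_mono_on (hψint r)
          ((integrableOn_const (C := 2 * c₂ / K) (by simp [Real.volume_Ioo])))
          measurableSet_Ioo (fun s _ => hψle s)
      _ = (2 * c₂ / K) * r := by
        rw [setIntegral_const, smul_eq_mul, Real.volume_real_Ioo_of_le hr, sub_zero]
        ring
  have hφnn : ∀ r : ℝ, 0 ≤ φ r := fun r => by
    rw [hφ r]; exact setIntegral_nonneg measurableSet_Ioo fun s _ => hψnn s
  -- lower bound on φ from an eventual lower bound on ψ
  have hφlb : ∀ B r₀ r : ℝ, 0 < r₀ → (∀ s : ℝ, r₀ ≤ s → B ≤ ψ s) → r₀ ≤ r →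
      B * (r - r₀) ≤ φ r := by
    intro B r₀ r hr₀ hB hr
    have h1 : (∫ t in Set.Ioo r₀ r, ψ t) ≤ φ r := by
      rw [hφ r]
      refine setIntegral_mono_set (hψint r) ?_
        (Set.Ioo_subset_Ioo hr₀.le le_rfl).eventuallyLE
      filter_upwards with s using hψnn s
    refine le_trans ?_ h1
    have h2 : (∫ _ in Set.Ioo r₀ r, B) ≤ ∫ t in Set.Ioo r₀ r, ψ t :=
      setIntegral_mono_on ((integrableOn_const (C := B) (by simp [Real.volume_Ioo])))
        ((hψint r).mono_set (Set.Ioo_subset_Ioo hr₀.le le_rfl)) measurableSet_Ioo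
        (fun s hs => hB s hs.1.le)
    refine le_trans (le_of_eq ?_) h2
    rw [setIntegral_const, smul_eq_mul,
      Real.volume_real_Ioo_of_le (by linarith : r₀ ≤ r)]
    ring
  -- lower bound on ψ for large r
  have hψlb : ∀ s₀ r : ℝ, 0 < s₀ → s₀ ≤ r →
      2 * c₁ / K * (u s₀ / C) * (1 - Real.exp (K * (s₀ - r))) ≤ ψ r := by
    intro s₀ r hs₀ hs₀r
    have hr : 0 < r := lt_of_lt_of_le hs₀ hs₀r
    have hstep1 : (∫ s in Set.Ioo s₀ r, c₁ * u s₀ * Real.exp (K*s))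
        ≤ ∫ s in Set.Ioo s₀ r, η s * f s := by
      refine setIntegral_mono_on ((hexp_int s₀ r).const_mul (c₁ * u s₀))
        ((hηf_int r).mono_set (Set.Ioo_subset_Ioo hs₀.le le_rfl)) measurableSet_Ioo ?_
      intro s hs
      have hspos : 0 < s := hs₀.trans hs.1
      have hc : c₁ * f s ≤ η s * f s :=
        mul_le_mul_of_nonneg_right (hηbounds s hspos).1 (hfnn s hspos.le)
      refine le_trans ?_ hc
      rw [hfu s hspos.le]
      have hus : u s₀ ≤ u s := auxU_mono m₁ m₂ hm₁ hm₂ hs₀.le hs.1.le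
      nlinarith [mul_le_mul_of_nonneg_left hus
        (mul_nonneg hc₁.le (Real.exp_pos (K*s)).le)]
    have h1 : (∫ s in Set.Ioo s₀ r, c₁ * u s₀ * Real.exp (K*s))
        ≤ ∫ s in Set.Ioo (0:ℝ) r, η s * f s := by
      refine hstep1.trans (setIntegral_mono_set (hηf_int r) ?_
        (Set.Ioo_subset_Ioo hs₀.le le_rfl).eventuallyLE)
      rw [Filter.EventuallyLE, ae_restrict_iff' measurableSet_Ioo]
      filter_upwards with s hs using hηfnn s hs.1
    have hval : (∫ s in Set.Ioo s₀ r, c₁ * u s₀ * Real.exp (K*s))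
        = c₁ * u s₀ * ((Real.exp (K*r) - Real.exp (K*s₀))/K) := by
      rw [← aux_int_exp K s₀ r hK.ne' hs₀r, ← integral_const_mul]
    rw [hψ r]
    have hfr := hfpos r hr
    have hfle : f r ≤ Real.exp (K*r) * C := by
      rw [hfu r hr.le]
      exact mul_le_mul_of_nonneg_left (auxU_le_C m₁ m₂ hm₁ hm₂ hr.le) (Real.exp_pos _).le
    have hnum : 0 ≤ Real.exp (K*r) - Real.exp (K*s₀) :=
      sub_nonneg.mpr (Real.exp_le_exp.mpr (by nlinarith))
    have hus₀ : 0 ≤ u s₀ := auxU_nonneg m₁ m₂ hs₀.le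
    have h2 : 2 * c₁ / K * (u s₀ / C) * (1 - Real.exp (K * (s₀ - r)))
        ≤ (2 / f r) * (c₁ * u s₀ * ((Real.exp (K*r) - Real.exp (K*s₀))/K)) := by
      have hexpdiff : Real.exp (K * (s₀ - r)) = Real.exp (K*s₀) / Real.exp (K*r) := by
        rw [← Real.exp_sub]; ring_nf
      have hstep : 2 * c₁ / K * (u s₀ / C) * (1 - Real.exp (K * (s₀ - r)))
          = (2 / (Real.exp (K*r) * C)) * (c₁ * u s₀ * ((Real.exp (K*r) - Real.exp (K*s₀))/K)) := by
        rw [hexpdiff]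
        have h0 : Real.exp (K*r) ≠ 0 := (Real.exp_pos _).ne'
        field_simp
      rw [hstep]
      refine mul_le_mul_of_nonneg_right ?_
        (mul_nonneg (mul_nonneg hc₁.le hus₀) (div_nonneg hnum hK.le))
      gcongr
    refine h2.trans (mul_le_mul_of_nonneg_left ?_ (by positivity))
    rw [← hval]
    exact h1
  -- key eventual lower bound on ψ
  have hkey : ∀ ε : ℝ, 0 < ε → ∃ r₀ : ℝ, 1 ≤ r₀ ∧ ∀ r : ℝ, r₀ ≤ r → 2 * c₁ / K - ε ≤ ψ r := by
    intro ε hε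
    set A : ℝ := 2 * c₁ / K with hA
    have hApos : 0 < A := by positivity
    set δ : ℝ := min (1/2) (ε / (2 * A)) with hδ
    have hδpos : 0 < δ := lt_min (by norm_num) (by positivity)
    have hδhalf : δ ≤ 1/2 := min_le_left _ _
    have hδε : 2 * A * δ ≤ ε := by
      have h := min_le_right (1/2) (ε / (2*A))
      calc 2 * A * δ ≤ 2 * A * (ε / (2*A)) := by
            apply mul_le_mul_of_nonneg_left _ (by positivity)
            exact h
        _ = ε := by field_simp
    have hev : ∀ᶠ s in atTop, C * (1 - δ) ≤ u s :=
      (auxU_tendsto m₁ m₂).eventually (eventually_ge_nhds (by nlinarith))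
    obtain ⟨s₀, hs₀1, hs₀u⟩ := ((eventually_ge_atTop (1:ℝ)).and hev).exists
    have hs₀pos : 0 < s₀ := lt_of_lt_of_le one_pos hs₀1
    refine ⟨max 1 (s₀ - Real.log δ / K), le_max_left _ _, ?_⟩
    intro r hr
    have hlogδ : Real.log δ < 0 := Real.log_neg hδpos (by linarith)
    have hs₀r : s₀ ≤ r := by
      have := le_max_right (1:ℝ) (s₀ - Real.log δ / K)
      have hq : Real.log δ / K ≤ 0 := div_nonpos_iff.2 (Or.inr ⟨hlogδ.le, hK.le⟩)
      have h2 : s₀ ≤ s₀ - Real.log δ / K := by linarith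
      linarith [le_trans (le_trans h2 this) hr]
    have hexpδ : Real.exp (K * (s₀ - r)) ≤ δ := by
      have h2 : r ≥ s₀ - Real.log δ / K := le_trans (le_max_right _ _) hr
      have h3 : K * (s₀ - r) ≤ Real.log δ := by
        have : s₀ - r ≤ Real.log δ / K := by linarith
        calc K * (s₀ - r) ≤ K * (Real.log δ / K) :=
              mul_le_mul_of_nonneg_left this hK.le
          _ = Real.log δ := by field_simp
      calc Real.exp (K * (s₀ - r)) ≤ Real.exp (Real.log δ) := Real.exp_le_exp.mpr h3
        _ = δ := Real.exp_log hδpos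
    have hmain := hψlb s₀ r hs₀pos hs₀r
    have hufrac : 1 - δ ≤ u s₀ / C := by
      rw [le_div_iff₀ hCpos]; nlinarith
    have hufrac' : u s₀ / C ≤ 1 := by
      rw [div_le_one hCpos]
      exact auxU_le_C m₁ m₂ hm₁ hm₂ (by linarith)
    have hbig : A - ε ≤ A * (u s₀ / C) * (1 - Real.exp (K * (s₀ - r))) := by
      have he0 : 0 ≤ Real.exp (K * (s₀ - r)) := (Real.exp_pos _).le
      have hy : 1 - δ ≤ 1 - Real.exp (K * (s₀ - r)) := by linarith
      have hy0 : (0:ℝ) ≤ 1 - δ := by linarith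
      have hx0 : 0 ≤ u s₀ / C :=
        div_nonneg (auxU_nonneg m₁ m₂ (le_trans zero_le_one hs₀1)) hCpos.le
      have hxy : (1-δ)*(1-δ) ≤ (u s₀ / C) * (1 - Real.exp (K * (s₀ - r))) :=
        mul_le_mul hufrac hy hy0 hx0
      have h5 : A * ((1-δ)*(1-δ)) ≤ A * ((u s₀ / C) * (1 - Real.exp (K * (s₀ - r)))) :=
        mul_le_mul_of_nonneg_left hxy hApos.le
      nlinarith [hδε, hδpos.le]
    exact hbig.trans hmain
  -- eventual lower bound on φ r / r
  have hkey2 : ∀ ε : ℝ, 0 < ε → ∀ᶠ r in atTop, 2 * c₁ / K - ε ≤ φ r / r := by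
    intro ε hε
    obtain ⟨r₀, hr₀1, hr₀⟩ := hkey (ε/2) (by positivity)
    set B : ℝ := 2 * c₁ / K - ε/2 with hB
    have hφlb' : ∀ r : ℝ, r₀ ≤ r → B * (r - r₀) ≤ φ r :=
      fun r hr => hφlb B r₀ r (by linarith) (fun s hs => hr₀ s hs) hr
    have htend : Tendsto (fun r : ℝ => B * (r - r₀) / r) atTop (nhds B) := by
      have h1 : Tendsto (fun r : ℝ => r₀ / r) atTop (nhds 0) :=
        tendsto_const_nhds.div_atTop tendsto_id
      have h2 : Tendsto (fun r : ℝ => B * (1 - r₀ / r)) atTop (nhds B) := by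
        have := ((tendsto_const_nhds (x := (1:ℝ))).sub h1).const_mul B
        simpa using this
      refine h2.congr' ?_
      filter_upwards [eventually_gt_atTop (0:ℝ)] with r hr
      field_simp
    have hev := htend.eventually (eventually_ge_nhds (show B - ε/2 < B by linarith))
    filter_upwards [hev, eventually_ge_atTop r₀, eventually_gt_atTop (0:ℝ)] with r h1 h2 h3
    have h4 := hφlb' r h2
    have h5 : B * (r - r₀) / r ≤ φ r / r := by gcongr
    have : B - ε/2 = 2 * c₁ / K - ε := by rw [hB]; ring
    linarith
  -- liminf and limsup
  have hupper_ev : ∀ᶠ r in atTop, φ r / r ≤ 2 * c₂ / K := by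
    filter_upwards [eventually_gt_atTop (0:ℝ)] with r hr
    rw [div_le_iff₀ hr]
    calc φ r ≤ (2 * c₂ / K) * r := hφle r hr.le
      _ = 2 * c₂ / K * r := rfl
  have hlower_ev : ∀ᶠ r in atTop, (0:ℝ) ≤ φ r / r := by
    filter_upwards [eventually_gt_atTop (0:ℝ)] with r hr
    exact div_nonneg (hφnn r) hr.le
  have hcob_le : IsCoboundedUnder (· ≤ ·) atTop (fun r : ℝ => φ r / r) :=
    isCoboundedUnder_le_of_eventually_le atTop hlower_ev
  have hcob_ge : IsCoboundedUnder (· ≥ ·) atTop (fun r : ℝ => φ r / r) :=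
    isCoboundedUnder_ge_of_eventually_le atTop hupper_ev
  have hliminf : 2 * c₁ / K ≤ liminf (fun r : ℝ => φ r / r) atTop := by
    apply le_of_forall_sub_le
    intro ε hε
    exact le_liminf_of_le hcob_ge (hkey2 ε hε)
  have hlimsup : limsup (fun r : ℝ => φ r / r) atTop ≤ 2 * c₂ / K :=
    limsup_le_of_le hcob_le hupper_ev
  refine ⟨hliminf, hlimsup, ?_⟩
  obtain ⟨r₀, hr₀1, hr₀⟩ := hkey (c₁ / K) (by positivity)
  refine ⟨c₁ / (2*K), 2 * c₂ / K, 2 * r₀, by positivity, ?_, by linarith, ?_⟩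
  · rw [div_le_div_iff₀ (by positivity) hK]
    nlinarith
  · intro r hr
    have hr₀r : r₀ ≤ r := by linarith
    constructor
    · have h1 := hφlb (c₁ / K) r₀ r (by linarith)
        (fun s hs => by
          have := hr₀ s hs
          have he : 2 * c₁ / K - c₁ / K = c₁ / K := by ring
          linarith) hr₀r
      have h2 : c₁ / (2*K) * r ≤ c₁ / K * (r - r₀) := by
        have hc : c₁ / (2*K) * r = c₁ / K * (r/2) := by
          rw [mul_comm (2:ℝ) K, ← div_div]
          ring
        rw [hc]
        apply mul_le_mul_of_nonneg_left _ (by positivity)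
        linarith
      linarith
    · have := hφle r (by linarith)
      linarith
end
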